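/- Let n ≥ 3 be an integer and let G_0 be the graph with vertex set {v_{i,p} : i ∈ {1,2,3}, 1 ≤ p ≤ n} \ {v_{2,n}} where for each i ∈ {1,2,3} the surviving vertices with first index i form a complete graph, v_{1,p} is adjacent to v_{2,p} and v_{2,p} is adjacent to v_{3,p} for each 1 ≤ p ≤ n − 1, and additionally v_{1,n} is adjacent to v_{3,n} (i.e., G_0 is obtained from K_n □ P_3 by deleting the middle vertex v_{2,n} of the induced path v_{1,n}v_{2,n}v_{3,n} and adding the edge v_{1,n}v_{3,n}). Then G_0 is n-regular and minimally ((n+1)/3)-tough. -/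

import Mathlib

open SimpleGraph

noncomputable def numComp {V : Type*} (G : SimpleGraph V) (S : Set V) : ℕ :=
  Nat.card (G.induce Sᶜ).ConnectedComponent

def Tough {V : Type*} (t : ℝ) (G : SimpleGraph V) : Prop :=
  ∀ S : Set V, 2 ≤ numComp G S → t * (numComp G S : ℝ) ≤ (S.ncard : ℝ)

def MinTough {V : Type*} (t : ℝ) (G : SimpleGraph V) : Prop :=
  Tough t G ∧ ∀ e ∈ G.edgeSet, ¬ Tough t (G.deleteEdges {e})

noncomputable def ndeg {V : Type*} (G : SimpleGraph V) (v : V) : ℕ :=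
  (G.neighborSet v).ncard

def delVert (n : ℕ) (h : 0 < n) : Fin 3 × Fin n :=
  (1, ⟨n - 1, Nat.sub_lt h Nat.one_pos⟩)

def G0 (n : ℕ) (h : 0 < n) : SimpleGraph {x : Fin 3 × Fin n // x ≠ delVert n h} :=
  SimpleGraph.fromRel (fun x y =>
    (x.1.1 = y.1.1 ∧ x.1.2 ≠ y.1.2) ∨
    (x.1.2 = y.1.2 ∧ x.1.1.val + 1 = y.1.1.val) ∨
    (x.1 = (0, ⟨n - 1, Nat.sub_lt h Nat.one_pos⟩) ∧
     y.1 = (2, ⟨n - 1, Nat.sub_lt h Nat.one_pos⟩)))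

namespace G0Aux

/-! ### Generic graph lemmas -/

lemma reach_invar {W : Type*} {H : SimpleGraph W} (P : W → Prop)
    (hP : ∀ a b, H.Adj a b → P a → P b) {x y : W} (hr : H.Reachable x y) (hx : P x) : P y := by
  obtain ⟨w⟩ := hr
  revert hx
  induction w with
  | nil => exact id
  | cons hab _ ih => exact fun hx => ih (hP _ _ hab hx)

lemma isolated_reach {W : Type*} {H : SimpleGraph W} {x : W}
    (hx : ∀ y, ¬ H.Adj x y) {y : W} (hr : H.Reachable x y) : x = y := by
  refine reach_invar (fun z => x = z) (fun a b hab hxa => ?_) hr rfl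
  exact absurd (hxa ▸ hab) (hx b)

lemma mk_out {W : Type*} (H : SimpleGraph W) (c : H.ConnectedComponent) :
    H.connectedComponentMk (Quot.out c) = c := Quot.out_eq c

lemma le_numComp_of_pairwise {W : Type*} [Finite W] (H : SimpleGraph W) {k : ℕ} (f : Fin k → W)
    (hf : ∀ i j, i ≠ j → ¬ H.Reachable (f i) (f j)) : k ≤ Nat.card H.ConnectedComponent := by
  have : Nat.card (Fin k) ≤ Nat.card H.ConnectedComponent := by
    apply Nat.card_le_card_of_injective (fun i => H.connectedComponentMk (f i))
    intro i j hij
    by_contra hne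
    exact hf i j hne (ConnectedComponent.eq.1 hij)
  simpa using this

lemma le_ncard_of_inj {α : Type*} [Finite α] {S : Set α} {k : ℕ} (f : Fin k → α)
    (hmem : ∀ i, f i ∈ S) (hinj : Function.Injective f) : k ≤ S.ncard := by
  have : Nat.card (Fin k) ≤ Nat.card S := by
    apply Nat.card_le_card_of_injective (fun i => (⟨f i, hmem i⟩ : S))
    intro i j hij
    exact hinj (congrArg Subtype.val hij)
  simpa [Nat.card_coe_set_eq] using this

lemma ncard_range_le {α : Type*} [Finite α] {k : ℕ} (g : Fin k → α) :
    (Set.range g).ncard ≤ k := by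
  rw [← Set.image_univ]
  calc (g '' Set.univ).ncard ≤ Set.univ.ncard := Set.ncard_image_le (Set.toFinite _)
  _ = k := by simp [Set.ncard_univ]

/-! ### Basic setup for `G0` -/

variable {n : ℕ}

abbrev VG (n : ℕ) (h : 0 < n) := {x : Fin 3 × Fin n // x ≠ delVert n h}

def lastc (n : ℕ) (h : 0 < n) : Fin n := ⟨n - 1, Nat.sub_lt h Nat.one_pos⟩

def mkV (h : 0 < n) (i : Fin 3) (p : Fin n) (hip : i ≠ 1 ∨ p.val ≠ n - 1) : VG n h :=
  ⟨(i, p), by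
    intro hc
    rw [delVert, Prod.ext_iff] at hc
    rcases hip with hi | hp
    · exact hi hc.1
    · exact hp (congrArg Fin.val hc.2)⟩

lemma mkV_fst (h : 0 < n) (i : Fin 3) (p : Fin n) (hip) : (mkV h i p hip).1 = (i, p) := rfl

def a0 (h : 0 < n) (p : Fin n) : VG n h := mkV h 0 p (Or.inl (by decide))
def a1 (h : 0 < n) (p : Fin n) (hp : p.val ≠ n - 1) : VG n h := mkV h 1 p (Or.inr hp)
def a2 (h : 0 < n) (p : Fin n) : VG n h := mkV h 2 p (Or.inl (by decide))

lemma a0_fst (h : 0 < n) (p : Fin n) : (a0 h p).1 = (0, p) := rfl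
lemma a1_fst (h : 0 < n) (p : Fin n) (hp) : (a1 h p hp).1 = (1, p) := rfl
lemma a2_fst (h : 0 < n) (p : Fin n) : (a2 h p).1 = (2, p) := rfl

/-- Every vertex is of one of the three forms. -/
lemma vert_cases (h : 0 < n) (x : VG n h) :
    (∃ p, x = a0 h p) ∨ (∃ p hp, x = a1 h p hp) ∨ (∃ p, x = a2 h p) := by
  obtain ⟨⟨i, p⟩, hx⟩ := x
  have h3 : i = 0 ∨ i = 1 ∨ i = 2 := by omega
  rcases h3 with rfl | rfl | rfl
  · exact Or.inl ⟨p, rfl⟩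
  · refine Or.inr (Or.inl ⟨p, ?_, rfl⟩)
    intro hc
    exact hx (Prod.ext_iff.2 ⟨rfl, Fin.ext hc⟩)
  · exact Or.inr (Or.inr ⟨p, rfl⟩)

lemma delVert_eq (h : 0 < n) : delVert n h = (1, lastc n h) := rfl

lemma col_ne_last {h : 0 < n} (x : VG n h) (hx : x.1.1 = 1) : x.1.2.val ≠ n - 1 := by
  intro hc
  exact x.2 (Prod.ext_iff.2 ⟨hx, Fin.ext hc⟩)

lemma G0_adj (h : 0 < n) {x y : VG n h} : (G0 n h).Adj x y ↔ x ≠ y ∧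
    (((x.1.1 = y.1.1 ∧ x.1.2 ≠ y.1.2) ∨
    (x.1.2 = y.1.2 ∧ x.1.1.val + 1 = y.1.1.val) ∨
    (x.1 = (0, lastc n h) ∧ y.1 = (2, lastc n h))) ∨
    ((y.1.1 = x.1.1 ∧ y.1.2 ≠ x.1.2) ∨
    (y.1.2 = x.1.2 ∧ y.1.1.val + 1 = x.1.1.val) ∨
    (y.1 = (0, lastc n h) ∧ x.1 = (2, lastc n h)))) := by
  rw [G0, fromRel_adj]
  rfl

lemma ne_of_fst {h : 0 < n} {x y : VG n h} (hne : x.1 ≠ y.1) : x ≠ y :=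
  fun hc => hne (by rw [hc])

lemma adj_row (h : 0 < n) {x y : VG n h} (hr : x.1.1 = y.1.1) (hc : x.1.2 ≠ y.1.2) :
    (G0 n h).Adj x y := by
  rw [G0_adj]
  exact ⟨ne_of_fst (fun hc' => hc (congrArg Prod.snd hc')), Or.inl (Or.inl ⟨hr, hc⟩)⟩

lemma fin3_01 : (0 : Fin 3) ≠ 1 := by decide
lemma fin3_12 : (1 : Fin 3) ≠ 2 := by decide
lemma fin3_02 : (0 : Fin 3) ≠ 2 := by decide

lemma adj01 (h : 0 < n) (p : Fin n) (hp : p.val ≠ n - 1) :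
    (G0 n h).Adj (a0 h p) (a1 h p hp) := by
  rw [G0_adj]
  exact ⟨ne_of_fst (fun hc => fin3_01 (congrArg Prod.fst hc)),
    Or.inl (Or.inr (Or.inl ⟨rfl, rfl⟩))⟩

lemma adj12 (h : 0 < n) (p : Fin n) (hp : p.val ≠ n - 1) :
    (G0 n h).Adj (a1 h p hp) (a2 h p) := by
  rw [G0_adj]
  exact ⟨ne_of_fst (fun hc => fin3_12 (congrArg Prod.fst hc)),
    Or.inl (Or.inr (Or.inl ⟨rfl, rfl⟩))⟩

lemma adj02 (h : 0 < n) :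
    (G0 n h).Adj (a0 h (lastc n h)) (a2 h (lastc n h)) := by
  rw [G0_adj]
  exact ⟨ne_of_fst (fun hc => fin3_02 (congrArg Prod.fst hc)),
    Or.inl (Or.inr (Or.inr ⟨rfl, rfl⟩))⟩

lemma adj_cases {h : 0 < n} {x y : VG n h} (ha : (G0 n h).Adj x y) :
    (x.1.1 = y.1.1 ∧ x.1.2 ≠ y.1.2) ∨
    (x.1.2 = y.1.2 ∧ (x.1.1.val + 1 = y.1.1.val ∨ y.1.1.val + 1 = x.1.1.val)) ∨
    ((x.1 = (0, lastc n h) ∧ y.1 = (2, lastc n h)) ∨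
     (y.1 = (0, lastc n h) ∧ x.1 = (2, lastc n h))) := by
  rcases (G0_adj h).1 ha with ⟨-, (⟨hr, hc⟩ | ⟨hc, hr⟩ | hs) | (⟨hr, hc⟩ | ⟨hc, hr⟩ | hs)⟩
  · exact Or.inl ⟨hr, hc⟩
  · exact Or.inr (Or.inl ⟨hc, Or.inl hr⟩)
  · exact Or.inr (Or.inr (Or.inl hs))
  · exact Or.inl ⟨hr.symm, fun hce => hc hce.symm⟩
  · exact Or.inr (Or.inl ⟨hc.symm, Or.inr hr⟩)
  · exact Or.inr (Or.inr (Or.inr hs))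

/-! ### Components and separation -/

section Sep
variable {h : 0 < n} (S : Set (VG n h))

lemma induce_adj' {S : Set (VG n h)} {u v : ↥Sᶜ}
    (ha : (G0 n h).Adj u.1 v.1) : ((G0 n h).induce Sᶜ).Adj u v := ha

lemma row_reach (u v : ↥Sᶜ) (hr : u.1.1.1 = v.1.1.1) :
    ((G0 n h).induce Sᶜ).Reachable u v := by
  by_cases he : u = v
  · exact he ▸ Reachable.refl u
  · refine (induce_adj' (adj_row h hr ?_)).reachable
    intro hc
    exact he (Subtype.ext (Subtype.ext (Prod.ext_iff.2 ⟨hr, hc⟩)))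

lemma rowOf_inj : Function.Injective
    (fun c : ((G0 n h).induce Sᶜ).ConnectedComponent => (Quot.out c).1.1.1) := by
  intro c1 c2 hcc
  rw [← mk_out _ c1, ← mk_out _ c2]
  exact ConnectedComponent.sound (row_reach S _ _ hcc)

lemma numComp_le_three : numComp (G0 n h) S ≤ 3 := by
  have := Nat.card_le_card_of_injective _ (rowOf_inj S)
  simpa [numComp] using this

def RSep (i j : Fin 3) : Prop :=
  ∀ u v : ↥Sᶜ, u.1.1.1 = i → v.1.1.1 = j → ¬ ((G0 n h).induce Sᶜ).Reachable u v

lemma rsep_symm {S : Set (VG n h)} {i j : Fin 3} (hs : RSep S i j) : RSep S j i :=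
  fun u v hu hv hr => hs v u hv hu hr.symm

lemma rsep_of {S : Set (VG n h)} {x y : ↥Sᶜ} (hxy : ¬ ((G0 n h).induce Sᶜ).Reachable x y) :
    RSep S x.1.1.1 y.1.1.1 := by
  intro u v hu hv hr
  exact hxy (((row_reach S x u hu.symm).trans hr).trans (row_reach S v y (hv.trans rfl)))

lemma mem_of_rsep {S : Set (VG n h)} {i j : Fin 3} (hsep : RSep S i j)
    {a b : VG n h} (hra : a.1.1 = i) (hrb : b.1.1 = j) (hadj : (G0 n h).Adj a b) :
    a ∈ S ∨ b ∈ S := by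
  by_contra hc
  push_neg at hc
  exact hsep ⟨a, hc.1⟩ ⟨b, hc.2⟩ hra hrb (induce_adj' hadj).reachable

end Sep

/-! ### Counting lemmas -/

section Count
variable {h : 0 < n} {S : Set (VG n h)}

lemma fst_snd_a0 (p : Fin n) : (a0 h p).1.2 = p := rfl
lemma fst_snd_a2 (p : Fin n) : (a2 h p).1.2 = p := rfl

lemma countA (hn3 : 3 ≤ n) (h01 : RSep S 0 1) (h12 : RSep S 1 2)
    (x1 : ↥Sᶜ) (hx1 : x1.1.1.1 = 1) : n ≤ S.ncard := by
  classical
  have hp0l : x1.1.1.2.val ≠ n - 1 := col_ne_last x1.1 hx1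
  set p0 : Fin n := x1.1.1.2 with hp0
  have hx1v : x1.1 = a1 h p0 hp0l := Subtype.ext (Prod.ext_iff.2 ⟨hx1, rfl⟩)
  have h2p0 : a2 h p0 ∈ S := by
    rcases mem_of_rsep h12 (a := a1 h p0 hp0l) (b := a2 h p0) rfl rfl (adj12 h p0 hp0l)
      with hm | hm
    · exact absurd hm (by rw [← hx1v]; exact x1.2)
    · exact hm
  have hcol : ∀ (p : Fin n) (hp : p.val ≠ n - 1), a1 h p hp ∉ S → a0 h p ∈ S := by
    intro p hp hn1
    rcases mem_of_rsep h01 (a := a0 h p) (b := a1 h p hp) rfl rfl (adj01 h p hp) with hm | hm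
    · exact hm
    · exact absurd hm hn1
  set f : Fin n → VG n h := fun k =>
    if hk : k.val < n - 1 then
      (if a1 h k (Nat.ne_of_lt hk) ∈ S then a1 h k (Nat.ne_of_lt hk) else a0 h k)
    else a2 h p0 with hf
  apply le_ncard_of_inj f
  · intro k
    by_cases hk : k.val < n - 1
    · rw [hf]
      simp only [dif_pos hk]
      split_ifs with h1
      · exact h1
      · exact hcol k (Nat.ne_of_lt hk) h1
    · rw [hf]
      simp only [dif_neg hk]
      exact h2p0
  · intro k1 k2 he
    simp only [hf] at he
    by_cases hk1 : k1.val < n - 1 <;> by_cases hk2 : k2.val < n - 1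
    · rw [dif_pos hk1, dif_pos hk2] at he
      split_ifs at he <;> exact congrArg (fun v : VG n h => v.1.2) he
    · rw [dif_pos hk1, dif_neg hk2] at he
      split_ifs at he with h1
      · exact absurd (congrArg (fun v : VG n h => v.1.1) he) fin3_12
      · exact absurd (congrArg (fun v : VG n h => v.1.1) he) fin3_02
    · rw [dif_neg hk1, dif_pos hk2] at he
      split_ifs at he with h1
      · exact absurd (congrArg (fun v : VG n h => v.1.1) he.symm) fin3_12
      · exact absurd (congrArg (fun v : VG n h => v.1.1) he.symm) fin3_02
    · exact Fin.ext (by omega)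

lemma countB (hn3 : 3 ≤ n) (h01 : RSep S 0 1) (h02 : RSep S 0 2) : n ≤ S.ncard := by
  classical
  have hcol : ∀ (p : Fin n) (hp : p.val ≠ n - 1), a1 h p hp ∉ S → a0 h p ∈ S := by
    intro p hp hn1
    rcases mem_of_rsep h01 (a := a0 h p) (b := a1 h p hp) rfl rfl (adj01 h p hp) with hm | hm
    · exact hm
    · exact absurd hm hn1
  have hlast : a0 h (lastc n h) ∈ S ∨ a2 h (lastc n h) ∈ S :=
    mem_of_rsep h02 rfl rfl (adj02 h)
  set f : Fin n → VG n h := fun k =>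
    if hk : k.val < n - 1 then
      (if a1 h k (Nat.ne_of_lt hk) ∈ S then a1 h k (Nat.ne_of_lt hk) else a0 h k)
    else (if a0 h (lastc n h) ∈ S then a0 h (lastc n h) else a2 h (lastc n h)) with hf
  apply le_ncard_of_inj f
  · intro k
    by_cases hk : k.val < n - 1
    · simp only [hf, dif_pos hk]
      split_ifs with h1
      · exact h1
      · exact hcol k (Nat.ne_of_lt hk) h1
    · simp only [hf, dif_neg hk]
      split_ifs with h1
      · exact h1
      · rcases hlast with hm | hm
        · exact absurd hm h1
        · exact hm
  · intro k1 k2 he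
    simp only [hf] at he
    by_cases hk1 : k1.val < n - 1 <;> by_cases hk2 : k2.val < n - 1
    · rw [dif_pos hk1, dif_pos hk2] at he
      split_ifs at he <;> exact congrArg (fun v : VG n h => v.1.2) he
    · rw [dif_pos hk1, dif_neg hk2] at he
      split_ifs at he <;>
        · have hcv : (k1 : ℕ) = n - 1 := congrArg (fun v : VG n h => v.1.2.val) he
          omega
    · rw [dif_neg hk1, dif_pos hk2] at he
      split_ifs at he <;>
        · have hcv : (k2 : ℕ) = n - 1 := (congrArg (fun v : VG n h => v.1.2.val) he).symm
          omega
    · exact Fin.ext (by omega)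

lemma countC (hn3 : 3 ≤ n) (h02 : RSep S 0 2) (h12 : RSep S 1 2) : n ≤ S.ncard := by
  classical
  have hcol : ∀ (p : Fin n) (hp : p.val ≠ n - 1), a1 h p hp ∉ S → a2 h p ∈ S := by
    intro p hp hn1
    rcases mem_of_rsep h12 (a := a1 h p hp) (b := a2 h p) rfl rfl (adj12 h p hp) with hm | hm
    · exact absurd hm hn1
    · exact hm
  have hlast : a0 h (lastc n h) ∈ S ∨ a2 h (lastc n h) ∈ S :=
    mem_of_rsep h02 rfl rfl (adj02 h)
  set f : Fin n → VG n h := fun k =>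
    if hk : k.val < n - 1 then
      (if a1 h k (Nat.ne_of_lt hk) ∈ S then a1 h k (Nat.ne_of_lt hk) else a2 h k)
    else (if a0 h (lastc n h) ∈ S then a0 h (lastc n h) else a2 h (lastc n h)) with hf
  apply le_ncard_of_inj f
  · intro k
    by_cases hk : k.val < n - 1
    · simp only [hf, dif_pos hk]
      split_ifs with h1
      · exact h1
      · exact hcol k (Nat.ne_of_lt hk) h1
    · simp only [hf, dif_neg hk]
      split_ifs with h1
      · exact h1
      · rcases hlast with hm | hm
        · exact absurd hm h1
        · exact hm
  · intro k1 k2 he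
    simp only [hf] at he
    by_cases hk1 : k1.val < n - 1 <;> by_cases hk2 : k2.val < n - 1
    · rw [dif_pos hk1, dif_pos hk2] at he
      split_ifs at he <;> exact congrArg (fun v : VG n h => v.1.2) he
    · rw [dif_pos hk1, dif_neg hk2] at he
      split_ifs at he <;>
        · have hcv : (k1 : ℕ) = n - 1 := congrArg (fun v : VG n h => v.1.2.val) he
          omega
    · rw [dif_neg hk1, dif_pos hk2] at he
      split_ifs at he <;>
        · have hcv : (k2 : ℕ) = n - 1 := (congrArg (fun v : VG n h => v.1.2.val) he).symm
          omega
    · exact Fin.ext (by omega)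

lemma countD (hb : ∀ u : ↥Sᶜ, u.1.1.1 ≠ 0) : n ≤ S.ncard := by
  apply le_ncard_of_inj (fun k => a0 h k)
  · intro k
    by_contra hm
    exact hb ⟨a0 h k, hm⟩ rfl
  · intro k1 k2 he
    exact congrArg (fun v : VG n h => v.1.2) he

lemma countE (hb : ∀ u : ↥Sᶜ, u.1.1.1 ≠ 2) : n ≤ S.ncard := by
  apply le_ncard_of_inj (fun k => a2 h k)
  · intro k
    by_contra hm
    exact hb ⟨a2 h k, hm⟩ rfl
  · intro k1 k2 he
    exact congrArg (fun v : VG n h => v.1.2) he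

lemma countF (hn3 : 3 ≤ n) (h02 : RSep S 0 2) (hb : ∀ u : ↥Sᶜ, u.1.1.1 ≠ 1) :
    n ≤ S.ncard := by
  classical
  have hlast : a0 h (lastc n h) ∈ S ∨ a2 h (lastc n h) ∈ S :=
    mem_of_rsep h02 rfl rfl (adj02 h)
  set f : Fin n → VG n h := fun k =>
    if hk : k.val < n - 1 then a1 h k (Nat.ne_of_lt hk)
    else (if a0 h (lastc n h) ∈ S then a0 h (lastc n h) else a2 h (lastc n h)) with hf
  apply le_ncard_of_inj f
  · intro k
    by_cases hk : k.val < n - 1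
    · simp only [hf, dif_pos hk]
      by_contra hm
      exact hb ⟨a1 h k (Nat.ne_of_lt hk), hm⟩ rfl
    · simp only [hf, dif_neg hk]
      split_ifs with h1
      · exact h1
      · rcases hlast with hm | hm
        · exact absurd hm h1
        · exact hm
  · intro k1 k2 he
    simp only [hf] at he
    by_cases hk1 : k1.val < n - 1 <;> by_cases hk2 : k2.val < n - 1
    · rw [dif_pos hk1, dif_pos hk2] at he
      exact congrArg (fun v : VG n h => v.1.2) he
    · rw [dif_pos hk1, dif_neg hk2] at he
      split_ifs at he <;>
        · have hcv : (k1 : ℕ) = n - 1 := congrArg (fun v : VG n h => v.1.2.val) he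
          omega
    · rw [dif_neg hk1, dif_pos hk2] at he
      split_ifs at he <;>
        · have hcv : (k2 : ℕ) = n - 1 := (congrArg (fun v : VG n h => v.1.2.val) he).symm
          omega
    · exact Fin.ext (by omega)

lemma key3 (hn3 : 3 ≤ n) (hc3 : numComp (G0 n h) S = 3) : n + 1 ≤ S.ncard := by
  classical
  have hbij : Function.Bijective
      (fun c : ((G0 n h).induce Sᶜ).ConnectedComponent => (Quot.out c).1.1.1) := by
    rw [Nat.bijective_iff_injective_and_card]
    refine ⟨rowOf_inj S, ?_⟩
    have : Nat.card ((G0 n h).induce Sᶜ).ConnectedComponent = 3 := hc3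
    rw [this]
    simp
  obtain ⟨c0, hc0⟩ := hbij.2 0
  obtain ⟨c1, hc1⟩ := hbij.2 1
  obtain ⟨c2, hc2⟩ := hbij.2 2
  set x0 : ↥Sᶜ := Quot.out c0
  set x1 : ↥Sᶜ := Quot.out c1
  set x2 : ↥Sᶜ := Quot.out c2
  have hnr : ∀ (ca cb : ((G0 n h).induce Sᶜ).ConnectedComponent), ca ≠ cb →
      ¬ ((G0 n h).induce Sᶜ).Reachable (Quot.out ca) (Quot.out cb) := by
    intro ca cb hne hr
    exact hne (by rw [← mk_out _ ca, ← mk_out _ cb]; exact ConnectedComponent.sound hr)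
  have hne01 : c0 ≠ c1 := fun hc => by rw [hc, hc1] at hc0; exact fin3_01 hc0.symm
  have hne12 : c1 ≠ c2 := fun hc => by rw [hc, hc2] at hc1; exact fin3_12 hc1.symm
  have hne02 : c0 ≠ c2 := fun hc => by rw [hc, hc2] at hc0; exact fin3_02 hc0.symm
  have h01 : RSep S 0 1 := by rw [← hc0, ← hc1]; exact rsep_of (hnr _ _ hne01)
  have h12 : RSep S 1 2 := by rw [← hc1, ← hc2]; exact rsep_of (hnr _ _ hne12)
  have h02 : RSep S 0 2 := by rw [← hc0, ← hc2]; exact rsep_of (hnr _ _ hne02)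
  -- memberships
  have hp0l : x1.1.1.2.val ≠ n - 1 := col_ne_last x1.1 hc1
  set p0 : Fin n := x1.1.1.2 with hp0
  have hx1v : x1.1 = a1 h p0 hp0l := Subtype.ext (Prod.ext_iff.2 ⟨hc1, rfl⟩)
  have h2p0 : a2 h p0 ∈ S := by
    rcases mem_of_rsep h12 (a := a1 h p0 hp0l) (b := a2 h p0) rfl rfl (adj12 h p0 hp0l)
      with hm | hm
    · exact absurd hm (by rw [← hx1v]; exact x1.2)
    · exact hm
  have hcol : ∀ (p : Fin n) (hp : p.val ≠ n - 1), a1 h p hp ∉ S → a0 h p ∈ S := by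
    intro p hp hn1
    rcases mem_of_rsep h01 (a := a0 h p) (b := a1 h p hp) rfl rfl (adj01 h p hp) with hm | hm
    · exact hm
    · exact absurd hm hn1
  have hlast : a0 h (lastc n h) ∈ S ∨ a2 h (lastc n h) ∈ S :=
    mem_of_rsep h02 rfl rfl (adj02 h)
  set f : Fin (n + 1) → VG n h := fun k =>
    if hk : k.val < n - 1 then
      (if a1 h ⟨k.val, by omega⟩ (Nat.ne_of_lt hk) ∈ S then a1 h ⟨k.val, by omega⟩ (Nat.ne_of_lt hk)
       else a0 h ⟨k.val, by omega⟩)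
    else if k.val = n - 1 then a2 h p0
    else (if a0 h (lastc n h) ∈ S then a0 h (lastc n h) else a2 h (lastc n h)) with hf
  apply le_ncard_of_inj f
  · intro k
    by_cases hk : k.val < n - 1
    · simp only [hf, dif_pos hk]
      split_ifs with hcase
      · exact hcase
      · exact hcol _ _ hcase
    · by_cases hk2 : k.val = n - 1
      · simp only [hf, dif_neg hk, if_pos hk2]
        exact h2p0
      · simp only [hf, dif_neg hk, if_neg hk2]
        split_ifs with hcase
        · exact hcase
        · rcases hlast with hm | hm
          · exact absurd hm hcase
          · exact hm
  · intro k1 k2 he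
    simp only [hf] at he
    by_cases hk1 : k1.val < n - 1 <;> by_cases hk2 : k2.val < n - 1
    · rw [dif_pos hk1, dif_pos hk2] at he
      split_ifs at he <;>
        · have hcv : (k1 : ℕ) = (k2 : ℕ) := congrArg (fun v : VG n h => v.1.2.val) he
          exact Fin.ext hcv
    · rw [dif_pos hk1, dif_neg hk2] at he
      by_cases hm2 : k2.val = n - 1
      · rw [if_pos hm2] at he
        split_ifs at he
        · exact absurd (congrArg (fun v : VG n h => v.1.1) he) fin3_12
        · exact absurd (congrArg (fun v : VG n h => v.1.1) he) fin3_02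
      · rw [if_neg hm2] at he
        split_ifs at he <;>
          · have hcv : (k1 : ℕ) = n - 1 := congrArg (fun v : VG n h => v.1.2.val) he
            omega
    · rw [dif_neg hk1, dif_pos hk2] at he
      by_cases hm1 : k1.val = n - 1
      · rw [if_pos hm1] at he
        split_ifs at he
        · exact absurd (congrArg (fun v : VG n h => v.1.1) he.symm) fin3_12
        · exact absurd (congrArg (fun v : VG n h => v.1.1) he.symm) fin3_02
      · rw [if_neg hm1] at he
        split_ifs at he <;>
          · have hcv : (k2 : ℕ) = n - 1 := (congrArg (fun v : VG n h => v.1.2.val) he).symm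
            omega
    · by_cases hm1 : k1.val = n - 1 <;> by_cases hm2 : k2.val = n - 1
      · exact Fin.ext (by omega)
      · rw [dif_neg hk1, dif_neg hk2, if_pos hm1, if_neg hm2] at he
        split_ifs at he <;>
          · have hcv : (p0 : ℕ) = n - 1 := congrArg (fun v : VG n h => v.1.2.val) he
            exact absurd hcv hp0l
      · rw [dif_neg hk1, dif_neg hk2, if_neg hm1, if_pos hm2] at he
        split_ifs at he <;>
          · have hcv : (p0 : ℕ) = n - 1 := (congrArg (fun v : VG n h => v.1.2.val) he).symm
            exact absurd hcv hp0l
      · exact Fin.ext (by omega)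

lemma pair01 (hn3 : 3 ≤ n) {x y : ↥Sᶜ} (hx : x.1.1.1 = 0) (hy : y.1.1.1 = 1)
    (hxy : ¬ ((G0 n h).induce Sᶜ).Reachable x y) : n ≤ S.ncard := by
  have h01 : RSep S 0 1 := by rw [← hx, ← hy]; exact rsep_of hxy
  by_cases hw : ∃ w : ↥Sᶜ, w.1.1.1 = 2
  · obtain ⟨w, hw2⟩ := hw
    by_cases hr : ((G0 n h).induce Sᶜ).Reachable w x
    · have hny : ¬ ((G0 n h).induce Sᶜ).Reachable w y := fun hc => hxy (hr.symm.trans hc)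
      have h12 : RSep S 1 2 := rsep_symm (by rw [← hw2, ← hy]; exact rsep_of hny)
      exact countA hn3 h01 h12 y hy
    · have h02 : RSep S 0 2 := rsep_symm (by rw [← hw2, ← hx]; exact rsep_of hr)
      exact countB hn3 h01 h02
  · push_neg at hw
    exact countE hw

lemma pair02 (hn3 : 3 ≤ n) {x y : ↥Sᶜ} (hx : x.1.1.1 = 0) (hy : y.1.1.1 = 2)
    (hxy : ¬ ((G0 n h).induce Sᶜ).Reachable x y) : n ≤ S.ncard := by
  have h02 : RSep S 0 2 := by rw [← hx, ← hy]; exact rsep_of hxy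
  by_cases hw : ∃ w : ↥Sᶜ, w.1.1.1 = 1
  · obtain ⟨w, hw1⟩ := hw
    by_cases hr : ((G0 n h).induce Sᶜ).Reachable w x
    · have hny : ¬ ((G0 n h).induce Sᶜ).Reachable w y := fun hc => hxy (hr.symm.trans hc)
      have h12 : RSep S 1 2 := by rw [← hw1, ← hy]; exact rsep_of hny
      exact countC hn3 h02 h12
    · have h01 : RSep S 0 1 := rsep_symm (by rw [← hw1, ← hx]; exact rsep_of hr)
      exact countB hn3 h01 h02
  · push_neg at hw
    exact countF hn3 h02 hw

lemma pair12 (hn3 : 3 ≤ n) {x y : ↥Sᶜ} (hx : x.1.1.1 = 1) (hy : y.1.1.1 = 2)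
    (hxy : ¬ ((G0 n h).induce Sᶜ).Reachable x y) : n ≤ S.ncard := by
  have h12 : RSep S 1 2 := by rw [← hx, ← hy]; exact rsep_of hxy
  by_cases hw : ∃ w : ↥Sᶜ, w.1.1.1 = 0
  · obtain ⟨w, hw0⟩ := hw
    by_cases hr : ((G0 n h).induce Sᶜ).Reachable w x
    · have hny : ¬ ((G0 n h).induce Sᶜ).Reachable w y := fun hc => hxy (hr.symm.trans hc)
      have h02 : RSep S 0 2 := by rw [← hw0, ← hy]; exact rsep_of hny
      exact countC hn3 h02 h12
    · have h01 : RSep S 0 1 := by rw [← hw0, ← hx]; exact rsep_of hr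
      exact countA hn3 h01 h12 x hx
  · push_neg at hw
    exact countD hw

lemma key2 (hn3 : 3 ≤ n) (h2 : 2 ≤ numComp (G0 n h) S) : n ≤ S.ncard := by
  have hnt : Nontrivial ((G0 n h).induce Sᶜ).ConnectedComponent := by
    apply Finite.one_lt_card_iff_nontrivial.1
    exact lt_of_lt_of_le Nat.one_lt_two h2
  obtain ⟨c1, c2, hc⟩ := hnt
  set x : ↥Sᶜ := Quot.out c1
  set y : ↥Sᶜ := Quot.out c2
  have hxy : ¬ ((G0 n h).induce Sᶜ).Reachable x y := fun hr =>
    hc (by rw [← mk_out _ c1, ← mk_out _ c2]; exact ConnectedComponent.sound hr)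
  have hyx : ¬ ((G0 n h).induce Sᶜ).Reachable y x := fun hr => hxy hr.symm
  have hrows : x.1.1.1 ≠ y.1.1.1 := fun hr => hxy (row_reach S x y hr)
  have hx3 : x.1.1.1 = 0 ∨ x.1.1.1 = 1 ∨ x.1.1.1 = 2 := by omega
  have hy3 : y.1.1.1 = 0 ∨ y.1.1.1 = 1 ∨ y.1.1.1 = 2 := by omega
  rcases hx3 with hx0 | hx1 | hx2 <;> rcases hy3 with hy0 | hy1 | hy2
  · exact absurd (hx0.trans hy0.symm) hrows
  · exact pair01 hn3 hx0 hy1 hxy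
  · exact pair02 hn3 hx0 hy2 hxy
  · exact pair01 hn3 hy0 hx1 hyx
  · exact absurd (hx1.trans hy1.symm) hrows
  · exact pair12 hn3 hx1 hy2 hxy
  · exact pair02 hn3 hy0 hx2 hyx
  · exact pair12 hn3 hy1 hx2 hyx
  · exact absurd (hx2.trans hy2.symm) hrows

lemma tough_G0 (h : 0 < n) (hn3 : 3 ≤ n) : Tough (((n : ℝ) + 1) / 3) (G0 n h) := by
  intro S h2
  have hle := numComp_le_three S
  have hkey2 : n ≤ S.ncard := key2 hn3 h2
  have hcast : (n : ℝ) ≤ (S.ncard : ℝ) := Nat.cast_le.2 hkey2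
  have hn3' : (3 : ℝ) ≤ (n : ℝ) := by exact_mod_cast hn3
  have hcases : numComp (G0 n h) S = 2 ∨ numComp (G0 n h) S = 3 := by omega
  rcases hcases with hc | hc
  · rw [hc]
    norm_num
    linarith
  · rw [hc]
    have hkey3 : n + 1 ≤ S.ncard := key3 hn3 hc
    have : (n : ℝ) + 1 ≤ (S.ncard : ℝ) := by exact_mod_cast hkey3
    linarith

end Count

/-! ### Degrees -/

section Deg
variable {h : 0 < n}

lemma ncard_range_inj {α : Type*} [Finite α] {k : ℕ} (f : Fin k → α)
    (hinj : Function.Injective f) : (Set.range f).ncard = k := by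
  rw [← Set.image_univ, Set.ncard_image_of_injective _ hinj, Set.ncard_univ]
  simp

lemma eq_a0 (w : VG n h) (hw : w.1.1 = 0) : w = a0 h w.1.2 :=
  Subtype.ext (Prod.ext_iff.2 ⟨hw, rfl⟩)

lemma eq_a1 (w : VG n h) (hw : w.1.1 = 1) : w = a1 h w.1.2 (col_ne_last w hw) :=
  Subtype.ext (Prod.ext_iff.2 ⟨hw, rfl⟩)

lemma eq_a2 (w : VG n h) (hw : w.1.1 = 2) : w = a2 h w.1.2 :=
  Subtype.ext (Prod.ext_iff.2 ⟨hw, rfl⟩)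

lemma deg_a0 (hn3 : 3 ≤ n) (p : Fin n) : ndeg (G0 n h) (a0 h p) = n := by
  classical
  set f : Fin n → VG n h := fun k =>
    if k = p then (if hp : p.val = n - 1 then a2 h p else a1 h p hp) else a0 h k with hf
  have hinj : Function.Injective f := by
    intro k1 k2 he
    simp only [hf] at he
    by_cases h1 : k1 = p <;> by_cases h2 : k2 = p
    · rw [h1, h2]
    · rw [if_pos h1, if_neg h2] at he
      split_ifs at he
      · exact absurd (congrArg (fun v : VG n h => v.1.1) he) (fun hc => fin3_02 hc.symm)
      · exact absurd (congrArg (fun v : VG n h => v.1.1) he) (fun hc => fin3_01 hc.symm)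
    · rw [if_neg h1, if_pos h2] at he
      split_ifs at he
      · exact absurd (congrArg (fun v : VG n h => v.1.1) he) fin3_02
      · exact absurd (congrArg (fun v : VG n h => v.1.1) he) fin3_01
    · rw [if_neg h1, if_neg h2] at he
      exact congrArg (fun v : VG n h => v.1.2) he
  have hset : (G0 n h).neighborSet (a0 h p) = Set.range f := by
    ext w
    simp only [mem_neighborSet, Set.mem_range]
    constructor
    · intro ha
      rcases adj_cases ha with ⟨hr, hc⟩ | ⟨hc, hr | hr⟩ | ⟨hs1, hs2⟩ | ⟨hs1, hs2⟩
      · -- same row 0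
        have hw0 : w.1.1 = 0 := hr.symm
        refine ⟨w.1.2, ?_⟩
        have hne : w.1.2 ≠ p := fun hcc => hc (hcc.symm)
        simp only [hf, if_neg hne]
        exact (eq_a0 w hw0).symm
      · -- rung 0 -> 1 : w = a1 p
        have hw1 : w.1.1 = 1 := by
          have hv : w.1.1.val = 1 := by
            have h0 : (a0 h p).1.1.val = 0 := rfl
            omega
          exact Fin.ext hv
        have hcol : w.1.2 = p := hc.symm
        have hpl : p.val ≠ n - 1 := by
          have := col_ne_last w hw1
          rw [hcol] at this
          exact this
        refine ⟨p, ?_⟩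
        simp only [hf, if_pos rfl, dif_neg hpl]
        rw [eq_a1 w hw1]
        apply Subtype.ext
        rw [a1_fst, a1_fst, hcol]
      · -- reverse rung: w row + 1 = 0, impossible
        exfalso
        have h0 : (a0 h p).1.1.val = 0 := rfl
        omega
      · -- special : v = (0,last), w = (2,last)
        have hp' : p = lastc n h := congrArg Prod.snd hs1
        have hpl : p.val = n - 1 := congrArg Fin.val hp'
        refine ⟨p, ?_⟩
        simp only [hf, if_pos rfl, dif_pos hpl]
        apply Subtype.ext
        rw [a2_fst, hs2, hp']
      · -- reversed special: v.1 = (2, last): contradiction since row 0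
        exfalso
        exact fin3_02 (congrArg Prod.fst hs2 : (0 : Fin 3) = 2)
    · rintro ⟨k, rfl⟩
      by_cases hk : k = p
      · simp only [hf, if_pos hk]
        split_ifs with hp2
        · have hp' : p = lastc n h := Fin.ext hp2
          have : (G0 n h).Adj (a0 h (lastc n h)) (a2 h (lastc n h)) := adj02 h
          rw [← hp'] at this
          exact this
        · exact adj01 h p hp2
      · simp only [hf, if_neg hk]
        exact adj_row h (show (a0 h p).1.1 = (a0 h k).1.1 from rfl)
          (fun hcc => hk ((hcc : p = k)).symm)
  rw [ndeg, hset, ncard_range_inj f hinj]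

lemma deg_a2 (hn3 : 3 ≤ n) (p : Fin n) : ndeg (G0 n h) (a2 h p) = n := by
  classical
  set f : Fin n → VG n h := fun k =>
    if k = p then (if hp : p.val = n - 1 then a0 h p else a1 h p hp) else a2 h k with hf
  have hinj : Function.Injective f := by
    intro k1 k2 he
    simp only [hf] at he
    by_cases h1 : k1 = p <;> by_cases h2 : k2 = p
    · rw [h1, h2]
    · rw [if_pos h1, if_neg h2] at he
      split_ifs at he
      · exact absurd (congrArg (fun v : VG n h => v.1.1) he) fin3_02
      · exact absurd (congrArg (fun v : VG n h => v.1.1) he) fin3_12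
    · rw [if_neg h1, if_pos h2] at he
      split_ifs at he
      · exact absurd (congrArg (fun v : VG n h => v.1.1) he) (fun hc => fin3_02 hc.symm)
      · exact absurd (congrArg (fun v : VG n h => v.1.1) he) (fun hc => fin3_12 hc.symm)
    · rw [if_neg h1, if_neg h2] at he
      exact congrArg (fun v : VG n h => v.1.2) he
  have hset : (G0 n h).neighborSet (a2 h p) = Set.range f := by
    ext w
    simp only [mem_neighborSet, Set.mem_range]
    constructor
    · intro ha
      rcases adj_cases ha with ⟨hr, hc⟩ | ⟨hc, hr | hr⟩ | ⟨hs1, hs2⟩ | ⟨hs1, hs2⟩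
      · have hw2 : w.1.1 = 2 := hr.symm
        refine ⟨w.1.2, ?_⟩
        have hne : w.1.2 ≠ p := fun hcc => hc (hcc.symm)
        simp only [hf, if_neg hne]
        exact (eq_a2 w hw2).symm
      · exfalso
        have h0 : (a2 h p).1.1.val = 2 := rfl
        have h3 := w.1.1.isLt
        omega
      · -- w row + 1 = 2 : w row 1
        have hw1 : w.1.1 = 1 := by
          have hv : w.1.1.val = 1 := by
            have h0 : (a2 h p).1.1.val = 2 := rfl
            omega
          exact Fin.ext hv
        have hcol : w.1.2 = p := hc.symm
        have hpl : p.val ≠ n - 1 := by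
          have := col_ne_last w hw1
          rw [hcol] at this
          exact this
        refine ⟨p, ?_⟩
        simp only [hf, if_pos rfl, dif_neg hpl]
        rw [eq_a1 w hw1]
        apply Subtype.ext
        rw [a1_fst, a1_fst, hcol]
      · exact absurd (congrArg Prod.fst hs1 : (2 : Fin 3) = 0) (fun hc => fin3_02 hc.symm)
      · -- w.1 = (0, last), v.1 = (2, last)
        have hp' : p = lastc n h := congrArg Prod.snd hs2
        have hpl : p.val = n - 1 := congrArg Fin.val hp'
        refine ⟨p, ?_⟩
        simp only [hf, if_pos rfl, dif_pos hpl]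
        apply Subtype.ext
        rw [a0_fst, hs1, hp']
    · rintro ⟨k, rfl⟩
      by_cases hk : k = p
      · simp only [hf, if_pos hk]
        split_ifs with hp2
        · have hp' : p = lastc n h := Fin.ext hp2
          have : (G0 n h).Adj (a2 h (lastc n h)) (a0 h (lastc n h)) := (adj02 h).symm
          rw [← hp'] at this
          exact this
        · exact (adj12 h p hp2).symm
      · simp only [hf, if_neg hk]
        exact adj_row h (show (a2 h p).1.1 = (a2 h k).1.1 from rfl)
          (fun hcc => hk ((hcc : p = k)).symm)
  rw [ndeg, hset, ncard_range_inj f hinj]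

lemma deg_a1 (hn3 : 3 ≤ n) (p : Fin n) (hp : p.val ≠ n - 1) :
    ndeg (G0 n h) (a1 h p hp) = n := by
  classical
  set f : Fin n → VG n h := fun k =>
    if k = p then a0 h p else if hk : k.val = n - 1 then a2 h p else a1 h k hk with hf
  have hinj : Function.Injective f := by
    intro k1 k2 he
    simp only [hf] at he
    by_cases h1 : k1 = p <;> by_cases h2 : k2 = p
    · rw [h1, h2]
    · rw [if_pos h1, if_neg h2] at he
      split_ifs at he
      · exact absurd (congrArg (fun v : VG n h => v.1.1) he) fin3_02
      · exact absurd (congrArg (fun v : VG n h => v.1.1) he) fin3_01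
    · rw [if_neg h1, if_pos h2] at he
      split_ifs at he
      · exact absurd (congrArg (fun v : VG n h => v.1.1) he) (fun hc => fin3_02 hc.symm)
      · exact absurd (congrArg (fun v : VG n h => v.1.1) he) (fun hc => fin3_01 hc.symm)
    · rw [if_neg h1, if_neg h2] at he
      by_cases hl1 : k1.val = n - 1 <;> by_cases hl2 : k2.val = n - 1
      · exact Fin.ext (by omega)
      · rw [dif_pos hl1, dif_neg hl2] at he
        exact absurd (congrArg (fun v : VG n h => v.1.1) he) (fun hc => fin3_12 hc.symm)
      · rw [dif_neg hl1, dif_pos hl2] at he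
        exact absurd (congrArg (fun v : VG n h => v.1.1) he) fin3_12
      · rw [dif_neg hl1, dif_neg hl2] at he
        exact congrArg (fun v : VG n h => v.1.2) he
  have hset : (G0 n h).neighborSet (a1 h p hp) = Set.range f := by
    ext w
    simp only [mem_neighborSet, Set.mem_range]
    constructor
    · intro ha
      rcases adj_cases ha with ⟨hr, hc⟩ | ⟨hc, hr | hr⟩ | ⟨hs1, hs2⟩ | ⟨hs1, hs2⟩
      · have hw1 : w.1.1 = 1 := hr.symm
        refine ⟨w.1.2, ?_⟩
        have hne : w.1.2 ≠ p := fun hcc => hc (hcc.symm)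
        have hnl : w.1.2.val ≠ n - 1 := col_ne_last w hw1
        simp only [hf, if_neg hne, dif_neg hnl]
        exact (eq_a1 w hw1).symm
      · -- 1 + 1 = w row : w row 2
        have hw2 : w.1.1 = 2 := by
          have hv : w.1.1.val = 2 := by
            have h0 : (a1 h p hp).1.1.val = 1 := rfl
            omega
          exact Fin.ext hv
        have hcol : w.1.2 = p := hc.symm
        refine ⟨lastc n h, ?_⟩
        have hnp : lastc n h ≠ p := fun hcc => hp (by rw [← hcc]; rfl)
        simp only [hf, if_neg hnp, dif_pos (show (lastc n h).val = n - 1 from rfl)]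
        rw [eq_a2 w hw2]
        apply Subtype.ext
        rw [a2_fst, a2_fst, hcol]
      · -- w row + 1 = 1 : w row 0
        have hw0 : w.1.1 = 0 := by
          have hv : w.1.1.val = 0 := by
            have h0 : (a1 h p hp).1.1.val = 1 := rfl
            omega
          exact Fin.ext hv
        have hcol : w.1.2 = p := hc.symm
        refine ⟨p, ?_⟩
        simp only [hf, if_pos rfl]
        rw [eq_a0 w hw0]
        apply Subtype.ext
        rw [a0_fst, a0_fst, hcol]
      · exact absurd (congrArg Prod.fst hs1 : (1 : Fin 3) = 0) (fun hc => fin3_01 hc.symm)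
      · exact absurd (congrArg Prod.fst hs2 : (1 : Fin 3) = 2) fin3_12
    · rintro ⟨k, rfl⟩
      by_cases hk : k = p
      · simp only [hf, if_pos hk]
        exact (adj01 h p hp).symm
      · simp only [hf, if_neg hk]
        by_cases hl : k.val = n - 1
        · simp only [dif_pos hl]
          exact adj12 h p hp
        · simp only [dif_neg hl]
          exact adj_row h (show (a1 h p hp).1.1 = (a1 h k hl).1.1 from rfl)
            (fun hcc => hk ((hcc : p = k)).symm)
  rw [ndeg, hset, ncard_range_inj f hinj]

lemma ndeg_G0 (hn3 : 3 ≤ n) (v : VG n h) : ndeg (G0 n h) v = n := by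
  rcases vert_cases h v with ⟨p, rfl⟩ | ⟨p, hp, rfl⟩ | ⟨p, rfl⟩
  · exact deg_a0 hn3 p
  · exact deg_a1 hn3 p hp
  · exact deg_a2 hn3 p

end Deg

/-! ### Minimality -/

section Min
variable {h : 0 < n}

lemma two_comps {W : Type*} [Finite W] (H : SimpleGraph W) (a b : W)
    (hab : ¬H.Reachable a b) : 2 ≤ Nat.card H.ConnectedComponent := by
  apply le_numComp_of_pairwise H ![a, b]
  intro i j hij
  fin_cases i <;> fin_cases j
  · exact absurd rfl hij
  · exact hab
  · exact fun hr => hab hr.symm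
  · exact absurd rfl hij

lemma three_comps {W : Type*} [Finite W] (H : SimpleGraph W) (a b c : W)
    (hab : ¬H.Reachable a b) (hac : ¬H.Reachable a c) (hbc : ¬H.Reachable b c) :
    3 ≤ Nat.card H.ConnectedComponent := by
  apply le_numComp_of_pairwise H ![a, b, c]
  intro i j hij
  fin_cases i <;> fin_cases j
  · exact absurd rfl hij
  · exact hab
  · exact hac
  · exact fun hr => hab hr.symm
  · exact absurd rfl hij
  · exact hbc
  · exact fun hr => hac hr.symm
  · exact fun hr => hbc hr.symm
  · exact absurd rfl hij

lemma four_comps {W : Type*} [Finite W] (H : SimpleGraph W) (a b c d : W)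
    (hab : ¬H.Reachable a b) (hac : ¬H.Reachable a c) (had : ¬H.Reachable a d)
    (hbc : ¬H.Reachable b c) (hbd : ¬H.Reachable b d) (hcd : ¬H.Reachable c d) :
    4 ≤ Nat.card H.ConnectedComponent := by
  apply le_numComp_of_pairwise H ![a, b, c, d]
  intro i j hij
  fin_cases i <;> fin_cases j
  · exact absurd rfl hij
  · exact hab
  · exact hac
  · exact had
  · exact fun hr => hab hr.symm
  · exact absurd rfl hij
  · exact hbc
  · exact hbd
  · exact fun hr => hac hr.symm
  · exact fun hr => hbc hr.symm
  · exact absurd rfl hij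
  · exact hcd
  · exact fun hr => had hr.symm
  · exact fun hr => hbd hr.symm
  · exact fun hr => hcd hr.symm
  · exact absurd rfl hij

lemma notTough_of (hn3 : 3 ≤ n) (G' : SimpleGraph (VG n h)) (S : Set (VG n h))
    (k : ℕ) (hk : 2 ≤ k) (hω : k ≤ numComp G' S)
    (hS : (S.ncard : ℝ) < ((n : ℝ) + 1) / 3 * k) :
    ¬ Tough (((n : ℝ) + 1) / 3) G' := by
  intro ht
  have h2 : 2 ≤ numComp G' S := le_trans hk hω
  have hts := ht S h2
  have hmono : ((n : ℝ) + 1) / 3 * k ≤ ((n : ℝ) + 1) / 3 * (numComp G' S : ℝ) := by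
    apply mul_le_mul_of_nonneg_left _ (by positivity)
    exact_mod_cast hω
  linarith

lemma del_rung01 (hn3 : 3 ≤ n) (p : Fin n) (hp : p.val ≠ n - 1) :
    ¬ Tough (((n : ℝ) + 1) / 3) ((G0 n h).deleteEdges {s(a0 h p, a1 h p hp)}) := by
  classical
  set G' : SimpleGraph (VG n h) := (G0 n h).deleteEdges {s(a0 h p, a1 h p hp)} with hG'
  set g : Fin n → VG n h := fun k =>
    if k = p then a2 h p else if hk : k.val = n - 1 then a2 h (lastc n h) else a1 h k hk
    with hg
  set S : Set (VG n h) := Set.range g with hS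
  -- membership facts
  have mem_a2p : a2 h p ∈ S := ⟨p, by simp only [hg, if_pos rfl]⟩
  have mem_a2last : a2 h (lastc n h) ∈ S := by
    refine ⟨lastc n h, ?_⟩
    have h1 : lastc n h ≠ p := fun hc => hp (by rw [← hc]; rfl)
    simp only [hg, if_neg h1, dif_pos (show (lastc n h).val = n - 1 from rfl)]
  have mem_a1 : ∀ (k : Fin n) (hk : k.val ≠ n - 1), k ≠ p → a1 h k hk ∈ S := by
    intro k hk hkp
    exact ⟨k, by simp only [hg, if_neg hkp, dif_neg hk]⟩
  have nm_row0 : ∀ q : Fin n, a0 h q ∉ S := by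
    rintro q ⟨k, hk⟩
    simp only [hg] at hk
    split_ifs at hk
    · exact fin3_02 (congrArg (fun v : VG n h => v.1.1) hk).symm
    · exact fin3_02 (congrArg (fun v : VG n h => v.1.1) hk).symm
    · exact fin3_01 (congrArg (fun v : VG n h => v.1.1) hk).symm
  have nm_a1p : a1 h p hp ∉ S := by
    rintro ⟨k, hk⟩
    simp only [hg] at hk
    split_ifs at hk with h1 h2
    · exact fin3_12 (congrArg (fun v : VG n h => v.1.1) hk).symm
    · exact fin3_12 (congrArg (fun v : VG n h => v.1.1) hk).symm
    · exact h1 (congrArg (fun v : VG n h => v.1.2) hk)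
  have nm_a2 : ∀ q : Fin n, q ≠ p → q.val ≠ n - 1 → a2 h q ∉ S := by
    rintro q hq1 hq2 ⟨k, hk⟩
    simp only [hg] at hk
    split_ifs at hk with h1 h2
    · exact hq1 (congrArg (fun v : VG n h => v.1.2) hk).symm
    · exact hq2 ((congrArg (fun v : VG n h => v.1.2.val) hk).symm : q.val = n - 1)
    · exact fin3_12 (congrArg (fun v : VG n h => v.1.1) hk)
  -- the special column z
  have hz : ∃ z : Fin n, z ≠ p ∧ z.val ≠ n - 1 := by
    by_cases hp0 : p.val = 0
    · refine ⟨⟨1, by omega⟩, fun hc => ?_, by simp; omega⟩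
      have : (1 : ℕ) = p.val := congrArg Fin.val hc
      omega
    · refine ⟨⟨0, by omega⟩, fun hc => ?_, by simp; omega⟩
      have : (0 : ℕ) = p.val := congrArg Fin.val hc
      omega
  obtain ⟨z, hz1, hz2⟩ := hz
  -- vertices of the induced graph
  set ua : ↥Sᶜ := ⟨a1 h p hp, nm_a1p⟩
  set ub : ↥Sᶜ := ⟨a0 h ⟨0, by omega⟩, nm_row0 _⟩
  set uc : ↥Sᶜ := ⟨a2 h z, nm_a2 z hz1 hz2⟩
  -- ua is isolated
  have hiso : ∀ vv : ↥Sᶜ, ¬ (G'.induce Sᶜ).Adj ua vv := by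
    intro vv hadj
    have hadj' : G'.Adj (a1 h p hp) vv.1 := hadj
    rw [hG', deleteEdges_adj] at hadj'
    obtain ⟨hG0a, hne⟩ := hadj'
    rcases adj_cases hG0a with ⟨hr, hc⟩ | ⟨hc, hr | hr⟩ | ⟨hs1, hs2⟩ | ⟨hs1, hs2⟩
    · -- same row 1
      have hw1 : vv.1.1.1 = 1 := hr.symm
      apply vv.2
      rw [eq_a1 vv.1 hw1]
      exact mem_a1 _ _ (fun hcc => hc ((hcc ▸ rfl : vv.1.1.2 = p).symm))
    · -- row 2, col p
      have hw2 : vv.1.1.1 = 2 := by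
        have hv : vv.1.1.1.val = 2 := by
          have h0 : (a1 h p hp).1.1.val = 1 := rfl
          omega
        exact Fin.ext hv
      apply vv.2
      rw [eq_a2 vv.1 hw2]
      have : vv.1.1.2 = p := hc.symm
      rw [this]
      exact mem_a2p
    · -- row 0, col p : deleted edge
      have hw0 : vv.1.1.1 = 0 := by
        have hv : vv.1.1.1.val = 0 := by
          have h0 : (a1 h p hp).1.1.val = 1 := rfl
          omega
        exact Fin.ext hv
      have hveq : vv.1 = a0 h p := by
        rw [eq_a0 vv.1 hw0]
        apply Subtype.ext
        rw [a0_fst, a0_fst, ← hc]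
        rfl
      apply hne
      rw [Set.mem_singleton_iff, hveq]
      exact Sym2.eq_swap
    · exact fin3_01 ((congrArg Prod.fst hs1 : (1 : Fin 3) = 0)).symm
    · exact fin3_12 (congrArg Prod.fst hs2 : (1 : Fin 3) = 2)
  -- rows 0 and 2 are separated
  have hinv : ∀ aa bb : ↥Sᶜ, (G'.induce Sᶜ).Adj aa bb → aa.1.1.1 = 0 → bb.1.1.1 = 0 := by
    intro aa bb hadj hPa
    have hadj' : G'.Adj aa.1 bb.1 := hadj
    rw [hG', deleteEdges_adj] at hadj'
    obtain ⟨hG0a, hne⟩ := hadj'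
    rcases adj_cases hG0a with ⟨hr, hc⟩ | ⟨hc, hr | hr⟩ | ⟨hs1, hs2⟩ | ⟨hs1, hs2⟩
    · rw [← hr]; exact hPa
    · -- bb is row 1, col = aa col
      exfalso
      have hb1 : bb.1.1.1 = 1 := by
        have h0 : aa.1.1.1.val = 0 := congrArg Fin.val hPa
        have hv : bb.1.1.1.val = 1 := by omega
        exact Fin.ext hv
      have hbl : bb.1.1.2.val ≠ n - 1 := col_ne_last bb.1 hb1
      by_cases hcp : bb.1.1.2 = p
      · -- deleted edge
        apply hne
        rw [Set.mem_singleton_iff]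
        have haeq : aa.1 = a0 h p := by
          rw [eq_a0 aa.1 hPa]
          apply Subtype.ext
          rw [a0_fst, a0_fst, hc, hcp]
        have hbeq : bb.1 = a1 h p hp := by
          rw [eq_a1 bb.1 hb1]
          apply Subtype.ext
          rw [a1_fst, a1_fst, hcp]
        rw [haeq, hbeq]
      · apply bb.2
        rw [eq_a1 bb.1 hb1]
        exact mem_a1 _ _ hcp
    · -- bb row + 1 = aa row = 0, impossible
      exfalso
      have h0 : aa.1.1.1.val = 0 := congrArg Fin.val hPa
      omega
    · -- aa = (0,last), bb = (2,last) : but a2 last ∈ S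
      exfalso
      apply bb.2
      have hbeq : bb.1 = a2 h (lastc n h) := Subtype.ext hs2
      rw [hbeq]
      exact mem_a2last
    · -- aa = (2,last) contradicts row 0
      exfalso
      have : aa.1.1.1 = 2 := by rw [hs2]
      rw [hPa] at this
      exact fin3_02 this
  have hPbc : ¬ (G'.induce Sᶜ).Reachable ub uc := by
    intro hr
    have hco : uc.1.1.1 = 0 := reach_invar (fun vv : ↥Sᶜ => vv.1.1.1 = 0)
      (fun aa bb ha hb => hinv aa bb ha hb) hr rfl
    exact fin3_02 (hco : (2 : Fin 3) = 0).symm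
  -- conclude
  apply notTough_of hn3 G' S 3 (by omega)
  · exact three_comps _ ua ub uc
      (fun hr => by
        have heq := isolated_reach hiso hr
        exact fin3_01 (((congrArg (fun vv : ↥Sᶜ => vv.1.1.1) heq) : (1 : Fin 3) = 0)).symm)
      (fun hr => by
        have heq := isolated_reach hiso hr
        exact fin3_12 ((congrArg (fun vv : ↥Sᶜ => vv.1.1.1) heq) : (1 : Fin 3) = 2))
      hPbc
  · have hcard : S.ncard ≤ n := ncard_range_le g
    have : (S.ncard : ℝ) ≤ (n : ℝ) := Nat.cast_le.2 hcard
    have hn3' : (3 : ℝ) ≤ (n : ℝ) := by exact_mod_cast hn3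
    linarith

lemma del_rung12 (hn3 : 3 ≤ n) (p : Fin n) (hp : p.val ≠ n - 1) :
    ¬ Tough (((n : ℝ) + 1) / 3) ((G0 n h).deleteEdges {s(a1 h p hp, a2 h p)}) := by
  classical
  set G' : SimpleGraph (VG n h) := (G0 n h).deleteEdges {s(a1 h p hp, a2 h p)} with hG'
  set g : Fin n → VG n h := fun k =>
    if k = p then a0 h p else if hk : k.val = n - 1 then a0 h (lastc n h) else a1 h k hk
    with hg
  set S : Set (VG n h) := Set.range g with hS
  have mem_a0p : a0 h p ∈ S := ⟨p, by simp only [hg, if_pos rfl]⟩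
  have mem_a0last : a0 h (lastc n h) ∈ S := by
    refine ⟨lastc n h, ?_⟩
    have h1 : lastc n h ≠ p := fun hc => hp (by rw [← hc]; rfl)
    simp only [hg, if_neg h1, dif_pos (show (lastc n h).val = n - 1 from rfl)]
  have mem_a1 : ∀ (k : Fin n) (hk : k.val ≠ n - 1), k ≠ p → a1 h k hk ∈ S := by
    intro k hk hkp
    exact ⟨k, by simp only [hg, if_neg hkp, dif_neg hk]⟩
  have nm_row2 : ∀ q : Fin n, a2 h q ∉ S := by
    rintro q ⟨k, hk⟩
    simp only [hg] at hk
    split_ifs at hk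
    · exact fin3_02 (congrArg (fun v : VG n h => v.1.1) hk)
    · exact fin3_02 (congrArg (fun v : VG n h => v.1.1) hk)
    · exact fin3_12 (congrArg (fun v : VG n h => v.1.1) hk)
  have nm_a1p : a1 h p hp ∉ S := by
    rintro ⟨k, hk⟩
    simp only [hg] at hk
    split_ifs at hk with h1 h2
    · exact fin3_01 (congrArg (fun v : VG n h => v.1.1) hk)
    · exact fin3_01 (congrArg (fun v : VG n h => v.1.1) hk)
    · exact h1 (congrArg (fun v : VG n h => v.1.2) hk)
  have nm_a0 : ∀ q : Fin n, q ≠ p → q.val ≠ n - 1 → a0 h q ∉ S := by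
    rintro q hq1 hq2 ⟨k, hk⟩
    simp only [hg] at hk
    split_ifs at hk with h1 h2
    · exact hq1 (congrArg (fun v : VG n h => v.1.2) hk).symm
    · exact hq2 ((congrArg (fun v : VG n h => v.1.2.val) hk).symm : q.val = n - 1)
    · exact fin3_01 (congrArg (fun v : VG n h => v.1.1) hk).symm
  have hz : ∃ z : Fin n, z ≠ p ∧ z.val ≠ n - 1 := by
    by_cases hp0 : p.val = 0
    · refine ⟨⟨1, by omega⟩, fun hc => ?_, by simp; omega⟩
      have : (1 : ℕ) = p.val := congrArg Fin.val hc
      omega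
    · refine ⟨⟨0, by omega⟩, fun hc => ?_, by simp; omega⟩
      have : (0 : ℕ) = p.val := congrArg Fin.val hc
      omega
  obtain ⟨z, hz1, hz2⟩ := hz
  set ua : ↥Sᶜ := ⟨a1 h p hp, nm_a1p⟩
  set ub : ↥Sᶜ := ⟨a2 h ⟨0, by omega⟩, nm_row2 _⟩
  set uc : ↥Sᶜ := ⟨a0 h z, nm_a0 z hz1 hz2⟩
  have hiso : ∀ vv : ↥Sᶜ, ¬ (G'.induce Sᶜ).Adj ua vv := by
    intro vv hadj
    have hadj' : G'.Adj (a1 h p hp) vv.1 := hadj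
    rw [hG', deleteEdges_adj] at hadj'
    obtain ⟨hG0a, hne⟩ := hadj'
    rcases adj_cases hG0a with ⟨hr, hc⟩ | ⟨hc, hr | hr⟩ | ⟨hs1, hs2⟩ | ⟨hs1, hs2⟩
    · have hw1 : vv.1.1.1 = 1 := hr.symm
      apply vv.2
      rw [eq_a1 vv.1 hw1]
      exact mem_a1 _ _ (fun hcc => hc ((hcc ▸ rfl : vv.1.1.2 = p).symm))
    · -- row 2, col p : deleted edge
      have hw2 : vv.1.1.1 = 2 := by
        have hv : vv.1.1.1.val = 2 := by
          have h0 : (a1 h p hp).1.1.val = 1 := rfl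
          omega
        exact Fin.ext hv
      have hveq : vv.1 = a2 h p := by
        rw [eq_a2 vv.1 hw2]
        apply Subtype.ext
        rw [a2_fst, a2_fst, ← hc]
        rfl
      apply hne
      rw [Set.mem_singleton_iff, hveq]
    · -- row 0, col p
      have hw0 : vv.1.1.1 = 0 := by
        have hv : vv.1.1.1.val = 0 := by
          have h0 : (a1 h p hp).1.1.val = 1 := rfl
          omega
        exact Fin.ext hv
      apply vv.2
      have hveq : vv.1 = a0 h p := by
        rw [eq_a0 vv.1 hw0]
        apply Subtype.ext
        rw [a0_fst, a0_fst, ← hc]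
        rfl
      rw [hveq]
      exact mem_a0p
    · exact fin3_01 ((congrArg Prod.fst hs1 : (1 : Fin 3) = 0)).symm
    · exact fin3_12 (congrArg Prod.fst hs2 : (1 : Fin 3) = 2)
  have hinv : ∀ aa bb : ↥Sᶜ, (G'.induce Sᶜ).Adj aa bb → aa.1.1.1 = 2 → bb.1.1.1 = 2 := by
    intro aa bb hadj hPa
    have hadj' : G'.Adj aa.1 bb.1 := hadj
    rw [hG', deleteEdges_adj] at hadj'
    obtain ⟨hG0a, hne⟩ := hadj'
    rcases adj_cases hG0a with ⟨hr, hc⟩ | ⟨hc, hr | hr⟩ | ⟨hs1, hs2⟩ | ⟨hs1, hs2⟩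
    · rw [← hr]; exact hPa
    · -- aa row + 1 = bb row, aa row = 2 : impossible
      exfalso
      have h0 : aa.1.1.1.val = 2 := congrArg Fin.val hPa
      have h3 := bb.1.1.1.isLt
      omega
    · -- bb row + 1 = 2 : bb row 1
      exfalso
      have h0 : aa.1.1.1.val = 2 := congrArg Fin.val hPa
      have hb1 : bb.1.1.1 = 1 := by
        have hv : bb.1.1.1.val = 1 := by omega
        exact Fin.ext hv
      have hbl : bb.1.1.2.val ≠ n - 1 := col_ne_last bb.1 hb1
      by_cases hcp : bb.1.1.2 = p
      · apply hne
        rw [Set.mem_singleton_iff]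
        have haeq : aa.1 = a2 h p := by
          rw [eq_a2 aa.1 hPa]
          apply Subtype.ext
          rw [a2_fst, a2_fst, hc, hcp]
        have hbeq : bb.1 = a1 h p hp := by
          rw [eq_a1 bb.1 hb1]
          apply Subtype.ext
          rw [a1_fst, a1_fst, hcp]
        rw [haeq, hbeq]
        exact Sym2.eq_swap
      · apply bb.2
        rw [eq_a1 bb.1 hb1]
        exact mem_a1 _ _ hcp
    · -- aa = (0,last) : row contra
      exfalso
      have : aa.1.1.1 = 0 := by rw [hs1]
      rw [hPa] at this
      exact fin3_02 this.symm
    · -- bb = (0,last) ∈ S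
      exfalso
      apply bb.2
      have hbeq : bb.1 = a0 h (lastc n h) := Subtype.ext hs1
      rw [hbeq]
      exact mem_a0last
  have hPbc : ¬ (G'.induce Sᶜ).Reachable ub uc := by
    intro hr
    have hco : uc.1.1.1 = 2 := reach_invar (fun vv : ↥Sᶜ => vv.1.1.1 = 2)
      (fun aa bb ha hb => hinv aa bb ha hb) hr rfl
    exact fin3_02 (hco : (0 : Fin 3) = 2)
  apply notTough_of hn3 G' S 3 (by omega)
  · exact three_comps _ ua ub uc
      (fun hr => by
        have heq := isolated_reach hiso hr
        exact fin3_12 ((congrArg (fun vv : ↥Sᶜ => vv.1.1.1) heq) : (1 : Fin 3) = 2))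
      (fun hr => by
        have heq := isolated_reach hiso hr
        exact fin3_01 (((congrArg (fun vv : ↥Sᶜ => vv.1.1.1) heq) : (1 : Fin 3) = 0)).symm)
      hPbc
  · have hcard : S.ncard ≤ n := ncard_range_le g
    have : (S.ncard : ℝ) ≤ (n : ℝ) := Nat.cast_le.2 hcard
    have hn3' : (3 : ℝ) ≤ (n : ℝ) := by exact_mod_cast hn3
    linarith

lemma del_special (hn3 : 3 ≤ n) :
    ¬ Tough (((n : ℝ) + 1) / 3)
      ((G0 n h).deleteEdges {s(a0 h (lastc n h), a2 h (lastc n h))}) := by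
  classical
  set G' : SimpleGraph (VG n h) :=
    (G0 n h).deleteEdges {s(a0 h (lastc n h), a2 h (lastc n h))} with hG'
  have hc0l : (0 : ℕ) ≠ n - 1 := by omega
  have hc1l : (1 : ℕ) ≠ n - 1 := by omega
  set c0 : Fin n := ⟨0, by omega⟩ with hc0
  set c1 : Fin n := ⟨1, by omega⟩ with hc1
  set g : Fin n → VG n h := fun k =>
    if k = c0 then a0 h c0 else if hk : k.val = n - 1 then a2 h c0 else a1 h k hk
    with hg
  set S : Set (VG n h) := Set.range g with hS
  have mem_a0c0 : a0 h c0 ∈ S := ⟨c0, by simp only [hg, if_pos rfl]⟩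
  have mem_a2c0 : a2 h c0 ∈ S := by
    refine ⟨lastc n h, ?_⟩
    have h1 : lastc n h ≠ c0 := fun hc => hc0l (congrArg Fin.val hc).symm
    simp only [hg, if_neg h1, dif_pos (show (lastc n h).val = n - 1 from rfl)]
  have mem_a1 : ∀ (k : Fin n) (hk : k.val ≠ n - 1), k ≠ c0 → a1 h k hk ∈ S := by
    intro k hk hkp
    exact ⟨k, by simp only [hg, if_neg hkp, dif_neg hk]⟩
  have nm_a1c0 : a1 h c0 hc0l ∉ S := by
    rintro ⟨k, hk⟩
    simp only [hg] at hk
    split_ifs at hk with h1 h2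
    · exact fin3_01 (congrArg (fun v : VG n h => v.1.1) hk)
    · exact fin3_12 (congrArg (fun v : VG n h => v.1.1) hk).symm
    · exact h1 (congrArg (fun v : VG n h => v.1.2) hk)
  have nm_a0 : ∀ q : Fin n, q ≠ c0 → a0 h q ∉ S := by
    rintro q hq1 ⟨k, hk⟩
    simp only [hg] at hk
    split_ifs at hk with h1 h2
    · exact hq1 (congrArg (fun v : VG n h => v.1.2) hk).symm
    · exact fin3_02 (congrArg (fun v : VG n h => v.1.1) hk).symm
    · exact fin3_01 (congrArg (fun v : VG n h => v.1.1) hk).symm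
  have nm_a2 : ∀ q : Fin n, q ≠ c0 → a2 h q ∉ S := by
    rintro q hq1 ⟨k, hk⟩
    simp only [hg] at hk
    split_ifs at hk with h1 h2
    · exact fin3_02 (congrArg (fun v : VG n h => v.1.1) hk)
    · exact hq1 (congrArg (fun v : VG n h => v.1.2) hk).symm
    · exact fin3_12 (congrArg (fun v : VG n h => v.1.1) hk)
  have hc10 : c1 ≠ c0 := fun hc => by
    have : (1 : ℕ) = 0 := congrArg Fin.val hc
    omega
  set ua : ↥Sᶜ := ⟨a1 h c0 hc0l, nm_a1c0⟩
  set ub : ↥Sᶜ := ⟨a0 h c1, nm_a0 c1 hc10⟩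
  set uc : ↥Sᶜ := ⟨a2 h c1, nm_a2 c1 hc10⟩
  have hiso : ∀ vv : ↥Sᶜ, ¬ (G'.induce Sᶜ).Adj ua vv := by
    intro vv hadj
    have hadj' : G'.Adj (a1 h c0 hc0l) vv.1 := hadj
    rw [hG', deleteEdges_adj] at hadj'
    obtain ⟨hG0a, hne⟩ := hadj'
    rcases adj_cases hG0a with ⟨hr, hc⟩ | ⟨hc, hr | hr⟩ | ⟨hs1, hs2⟩ | ⟨hs1, hs2⟩
    · have hw1 : vv.1.1.1 = 1 := hr.symm
      apply vv.2
      rw [eq_a1 vv.1 hw1]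
      exact mem_a1 _ _ (fun hcc => hc ((hcc ▸ rfl : vv.1.1.2 = c0).symm))
    · have hw2 : vv.1.1.1 = 2 := by
        have hv : vv.1.1.1.val = 2 := by
          have h0 : (a1 h c0 hc0l).1.1.val = 1 := rfl
          omega
        exact Fin.ext hv
      apply vv.2
      have hveq : vv.1 = a2 h c0 := by
        rw [eq_a2 vv.1 hw2]
        apply Subtype.ext
        rw [a2_fst, a2_fst, ← hc]
        rfl
      rw [hveq]
      exact mem_a2c0
    · have hw0 : vv.1.1.1 = 0 := by
        have hv : vv.1.1.1.val = 0 := by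
          have h0 : (a1 h c0 hc0l).1.1.val = 1 := rfl
          omega
        exact Fin.ext hv
      apply vv.2
      have hveq : vv.1 = a0 h c0 := by
        rw [eq_a0 vv.1 hw0]
        apply Subtype.ext
        rw [a0_fst, a0_fst, ← hc]
        rfl
      rw [hveq]
      exact mem_a0c0
    · exact fin3_01 ((congrArg Prod.fst hs1 : (1 : Fin 3) = 0)).symm
    · exact fin3_12 (congrArg Prod.fst hs2 : (1 : Fin 3) = 2)
  have hinv : ∀ aa bb : ↥Sᶜ, (G'.induce Sᶜ).Adj aa bb → aa.1.1.1 = 0 → bb.1.1.1 = 0 := by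
    intro aa bb hadj hPa
    have hadj' : G'.Adj aa.1 bb.1 := hadj
    rw [hG', deleteEdges_adj] at hadj'
    obtain ⟨hG0a, hne⟩ := hadj'
    rcases adj_cases hG0a with ⟨hr, hc⟩ | ⟨hc, hr | hr⟩ | ⟨hs1, hs2⟩ | ⟨hs1, hs2⟩
    · rw [← hr]; exact hPa
    · -- bb row 1, same col
      exfalso
      have h0 : aa.1.1.1.val = 0 := congrArg Fin.val hPa
      have hb1 : bb.1.1.1 = 1 := by
        have hv : bb.1.1.1.val = 1 := by omega
        exact Fin.ext hv
      have hbl : bb.1.1.2.val ≠ n - 1 := col_ne_last bb.1 hb1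
      by_cases hcp : bb.1.1.2 = c0
      · -- then aa = a0 c0 ∈ S, contradiction with aa being a survivor
        apply aa.2
        have haeq : aa.1 = a0 h c0 := by
          rw [eq_a0 aa.1 hPa]
          apply Subtype.ext
          rw [a0_fst, a0_fst, hc, hcp]
        rw [haeq]
        exact mem_a0c0
      · apply bb.2
        rw [eq_a1 bb.1 hb1]
        exact mem_a1 _ _ hcp
    · exfalso
      have h0 : aa.1.1.1.val = 0 := congrArg Fin.val hPa
      omega
    · -- aa = (0,last), bb = (2,last) : the deleted edge
      apply absurd _ hne
      rw [Set.mem_singleton_iff]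
      have haeq : aa.1 = a0 h (lastc n h) := Subtype.ext hs1
      have hbeq : bb.1 = a2 h (lastc n h) := Subtype.ext hs2
      rw [haeq, hbeq]
    · exfalso
      have : aa.1.1.1 = 2 := by rw [hs2]
      rw [hPa] at this
      exact fin3_02 this
  have hPbc : ¬ (G'.induce Sᶜ).Reachable ub uc := by
    intro hr
    have hco : uc.1.1.1 = 0 := reach_invar (fun vv : ↥Sᶜ => vv.1.1.1 = 0)
      (fun aa bb ha hb => hinv aa bb ha hb) hr rfl
    exact fin3_02 (hco : (2 : Fin 3) = 0).symm
  apply notTough_of hn3 G' S 3 (by omega)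
  · exact three_comps _ ua ub uc
      (fun hr => by
        have heq := isolated_reach hiso hr
        exact fin3_01 (((congrArg (fun vv : ↥Sᶜ => vv.1.1.1) heq) : (1 : Fin 3) = 0)).symm)
      (fun hr => by
        have heq := isolated_reach hiso hr
        exact fin3_12 ((congrArg (fun vv : ↥Sᶜ => vv.1.1.1) heq) : (1 : Fin 3) = 2))
      hPbc
  · have hcard : S.ncard ≤ n := ncard_range_le g
    have : (S.ncard : ℝ) ≤ (n : ℝ) := Nat.cast_le.2 hcard
    have hn3' : (3 : ℝ) ≤ (n : ℝ) := by exact_mod_cast hn3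
    linarith

lemma del_row0 (hn3 : 3 ≤ n) (p q : Fin n) (hpq : p ≠ q) :
    ¬ Tough (((n : ℝ) + 1) / 3) ((G0 n h).deleteEdges {s(a0 h p, a0 h q)}) := by
  classical
  set G' : SimpleGraph (VG n h) := (G0 n h).deleteEdges {s(a0 h p, a0 h q)} with hG'
  set mate : (r : Fin n) → VG n h := fun r =>
    if hr : r.val = n - 1 then a2 h (lastc n h) else a1 h r hr with hmate
  have mate_row : ∀ r : Fin n, (mate r).1.1 ≠ 0 := by
    intro r
    simp only [hmate]
    split_ifs
    · exact fun hc => fin3_02 hc.symm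
    · exact fun hc => fin3_01 hc.symm
  set g : Fin n → VG n h := fun k =>
    if k = p then mate p else if k = q then mate q else a0 h k with hg
  set S : Set (VG n h) := Set.range g with hS
  have mem_matep : mate p ∈ S := ⟨p, by simp only [hg, if_pos rfl]⟩
  have mem_mateq : mate q ∈ S := by
    refine ⟨q, ?_⟩
    show (if q = p then mate p else if q = q then mate q else a0 h q) = mate q
    rw [if_neg (Ne.symm hpq)]
    exact if_pos rfl
  have mem_a0 : ∀ k : Fin n, k ≠ p → k ≠ q → a0 h k ∈ S :=
    fun k hk1 hk2 => ⟨k, by simp only [hg, if_neg hk1, if_neg hk2]⟩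
  have nm_a0 : ∀ r : Fin n, r = p ∨ r = q → a0 h r ∉ S := by
    rintro r hr ⟨k, hk⟩
    simp only [hg] at hk
    split_ifs at hk with h1 h2
    · exact mate_row p (congrArg (fun v : VG n h => v.1.1) hk)
    · exact mate_row q (congrArg (fun v : VG n h => v.1.1) hk)
    · rcases hr with rfl | rfl
      · exact h1 (congrArg (fun v : VG n h => v.1.2) hk)
      · exact h2 (congrArg (fun v : VG n h => v.1.2) hk)
  have hc0l : (0 : ℕ) ≠ n - 1 := by omega
  set c0 : Fin n := ⟨0, by omega⟩ with hc0
  have nm_a2c0 : a2 h c0 ∉ S := by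
    rintro ⟨k, hk⟩
    have haux : ∀ r : Fin n, mate r ≠ a2 h c0 := by
      intro r
      simp only [hmate]
      split_ifs with h1
      · intro hc
        exact hc0l ((congrArg (fun v : VG n h => v.1.2.val) hc).symm : (0:ℕ) = n - 1)
      · exact fun hc => fin3_12 (congrArg (fun v : VG n h => v.1.1) hc)
    simp only [hg] at hk
    split_ifs at hk
    · exact haux p hk
    · exact haux q hk
    · exact fin3_02 (congrArg (fun v : VG n h => v.1.1) hk)
  -- isolation of a0 p (using the deleted edge towards a0 q)
  have hiso0 : ∀ (r rr : Fin n), r = p ∧ rr = q ∨ r = q ∧ rr = p →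
      ∀ hm : a0 h r ∉ S, ∀ vv : ↥Sᶜ, ¬ (G'.induce Sᶜ).Adj ⟨a0 h r, hm⟩ vv := by
    rintro r rr hcase hm vv hadj
    have hadj' : G'.Adj (a0 h r) vv.1 := hadj
    rw [hG', deleteEdges_adj] at hadj'
    obtain ⟨hG0a, hne⟩ := hadj'
    rcases adj_cases hG0a with ⟨hr, hc⟩ | ⟨hc, hr | hr⟩ | ⟨hs1, hs2⟩ | ⟨hs1, hs2⟩
    · -- same row 0
      have hw0 : vv.1.1.1 = 0 := hr.symm
      by_cases hvq : vv.1.1.2 = rr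
      · -- deleted edge
        apply hne
        rw [Set.mem_singleton_iff]
        have hveq : vv.1 = a0 h rr := by
          rw [eq_a0 vv.1 hw0]
          apply Subtype.ext
          rw [a0_fst, a0_fst, hvq]
        rw [hveq]
        rcases hcase with ⟨rfl, rfl⟩ | ⟨rfl, rfl⟩
        · rfl
        · exact Sym2.eq_swap
      · apply vv.2
        rw [eq_a0 vv.1 hw0]
        apply mem_a0
        · intro hcc
          rcases hcase with ⟨rfl, rfl⟩ | ⟨rfl, rfl⟩
          · exact hc hcc.symm
          · exact hvq hcc
        · intro hcc
          rcases hcase with ⟨rfl, rfl⟩ | ⟨rfl, rfl⟩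
          · exact hvq hcc
          · exact hc hcc.symm
    · -- rung to row 1, col r
      have hw1 : vv.1.1.1 = 1 := by
        have hv : vv.1.1.1.val = 1 := by
          have h00 : (a0 h r).1.1.val = 0 := rfl
          omega
        exact Fin.ext hv
      have hrl : r.val ≠ n - 1 := by
        have := col_ne_last vv.1 hw1
        intro hcc
        exact this (by rw [← hc]; exact hcc)
      apply vv.2
      have hveq : vv.1 = a1 h r hrl := by
        rw [eq_a1 vv.1 hw1]
        apply Subtype.ext
        rw [a1_fst, a1_fst, ← hc]
        rfl
      rw [hveq]
      have hmater : mate r = a1 h r hrl := by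
        simp only [hmate, dif_neg hrl]
      rcases hcase with ⟨rfl, -⟩ | ⟨rfl, -⟩
      · exact hmater ▸ mem_matep
      · exact hmater ▸ mem_mateq
    · -- vv row + 1 = 0 : impossible
      have h00 : (a0 h r).1.1.val = 0 := rfl
      omega
    · -- special : r = last, vv = a2 last
      have hrlast : r = lastc n h := congrArg Prod.snd hs1
      apply vv.2
      have hveq : vv.1 = a2 h (lastc n h) := Subtype.ext hs2
      rw [hveq]
      have hmater : mate r = a2 h (lastc n h) := by
        simp only [hmate, dif_pos (show r.val = n - 1 from congrArg Fin.val hrlast)]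
      rcases hcase with ⟨rfl, -⟩ | ⟨rfl, -⟩
      · exact hmater ▸ mem_matep
      · exact hmater ▸ mem_mateq
    · exact fin3_02 (congrArg Prod.fst hs2 : (0 : Fin 3) = 2)
  have nm_p : a0 h p ∉ S := nm_a0 p (Or.inl rfl)
  have nm_q : a0 h q ∉ S := nm_a0 q (Or.inr rfl)
  set ua : ↥Sᶜ := ⟨a0 h p, nm_p⟩
  set ub : ↥Sᶜ := ⟨a0 h q, nm_q⟩
  set uc : ↥Sᶜ := ⟨a2 h c0, nm_a2c0⟩
  have hisoa := hiso0 p q (Or.inl ⟨rfl, rfl⟩) nm_p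
  have hisob := hiso0 q p (Or.inr ⟨rfl, rfl⟩) nm_q
  apply notTough_of hn3 G' S 3 (by omega)
  · exact three_comps _ ua ub uc
      (fun hr => by
        have heq := isolated_reach hisoa hr
        have : a0 h p = a0 h q := congrArg Subtype.val heq
        exact hpq (congrArg (fun v : VG n h => v.1.2) this))
      (fun hr => by
        have heq := isolated_reach hisoa hr
        have : a0 h p = a2 h c0 := congrArg Subtype.val heq
        exact fin3_02 (congrArg (fun v : VG n h => v.1.1) this))
      (fun hr => by
        have heq := isolated_reach hisob hr
        have : a0 h q = a2 h c0 := congrArg Subtype.val heq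
        exact fin3_02 (congrArg (fun v : VG n h => v.1.1) this))
  · have hcard : S.ncard ≤ n := ncard_range_le g
    have : (S.ncard : ℝ) ≤ (n : ℝ) := Nat.cast_le.2 hcard
    have hn3' : (3 : ℝ) ≤ (n : ℝ) := by exact_mod_cast hn3
    linarith

lemma del_row2 (hn3 : 3 ≤ n) (p q : Fin n) (hpq : p ≠ q) :
    ¬ Tough (((n : ℝ) + 1) / 3) ((G0 n h).deleteEdges {s(a2 h p, a2 h q)}) := by
  classical
  set G' : SimpleGraph (VG n h) := (G0 n h).deleteEdges {s(a2 h p, a2 h q)} with hG'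
  set mate : (r : Fin n) → VG n h := fun r =>
    if hr : r.val = n - 1 then a0 h (lastc n h) else a1 h r hr with hmate
  have mate_row : ∀ r : Fin n, (mate r).1.1 ≠ 2 := by
    intro r
    simp only [hmate]
    split_ifs
    · exact fun hc => fin3_02 hc
    · exact fun hc => fin3_12 hc
  set g : Fin n → VG n h := fun k =>
    if k = p then mate p else if k = q then mate q else a2 h k with hg
  set S : Set (VG n h) := Set.range g with hS
  have mem_matep : mate p ∈ S := ⟨p, by simp only [hg, if_pos rfl]⟩
  have mem_mateq : mate q ∈ S := by
    refine ⟨q, ?_⟩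
    show (if q = p then mate p else if q = q then mate q else a2 h q) = mate q
    rw [if_neg (Ne.symm hpq)]
    exact if_pos rfl
  have mem_a2 : ∀ k : Fin n, k ≠ p → k ≠ q → a2 h k ∈ S :=
    fun k hk1 hk2 => ⟨k, by simp only [hg, if_neg hk1, if_neg hk2]⟩
  have nm_a2 : ∀ r : Fin n, r = p ∨ r = q → a2 h r ∉ S := by
    rintro r hr ⟨k, hk⟩
    simp only [hg] at hk
    split_ifs at hk with h1 h2
    · exact mate_row p (congrArg (fun v : VG n h => v.1.1) hk)
    · exact mate_row q (congrArg (fun v : VG n h => v.1.1) hk)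
    · rcases hr with rfl | rfl
      · exact h1 (congrArg (fun v : VG n h => v.1.2) hk)
      · exact h2 (congrArg (fun v : VG n h => v.1.2) hk)
  have hc0l : (0 : ℕ) ≠ n - 1 := by omega
  set c0 : Fin n := ⟨0, by omega⟩ with hc0
  have nm_a0c0 : a0 h c0 ∉ S := by
    rintro ⟨k, hk⟩
    have haux : ∀ r : Fin n, mate r ≠ a0 h c0 := by
      intro r
      simp only [hmate]
      split_ifs with h1
      · intro hc
        exact hc0l ((congrArg (fun v : VG n h => v.1.2.val) hc).symm : (0:ℕ) = n - 1)
      · exact fun hc => fin3_01 (congrArg (fun v : VG n h => v.1.1) hc).symm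
    simp only [hg] at hk
    split_ifs at hk
    · exact haux p hk
    · exact haux q hk
    · exact fin3_02 (congrArg (fun v : VG n h => v.1.1) hk).symm
  have hiso0 : ∀ (r rr : Fin n), r = p ∧ rr = q ∨ r = q ∧ rr = p →
      ∀ hm : a2 h r ∉ S, ∀ vv : ↥Sᶜ, ¬ (G'.induce Sᶜ).Adj ⟨a2 h r, hm⟩ vv := by
    rintro r rr hcase hm vv hadj
    have hadj' : G'.Adj (a2 h r) vv.1 := hadj
    rw [hG', deleteEdges_adj] at hadj'
    obtain ⟨hG0a, hne⟩ := hadj'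
    rcases adj_cases hG0a with ⟨hr, hc⟩ | ⟨hc, hr | hr⟩ | ⟨hs1, hs2⟩ | ⟨hs1, hs2⟩
    · -- same row 2
      have hw2 : vv.1.1.1 = 2 := hr.symm
      by_cases hvq : vv.1.1.2 = rr
      · apply hne
        rw [Set.mem_singleton_iff]
        have hveq : vv.1 = a2 h rr := by
          rw [eq_a2 vv.1 hw2]
          apply Subtype.ext
          rw [a2_fst, a2_fst, hvq]
        rw [hveq]
        rcases hcase with ⟨rfl, rfl⟩ | ⟨rfl, rfl⟩
        · rfl
        · exact Sym2.eq_swap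
      · apply vv.2
        rw [eq_a2 vv.1 hw2]
        apply mem_a2
        · intro hcc
          rcases hcase with ⟨rfl, rfl⟩ | ⟨rfl, rfl⟩
          · exact hc hcc.symm
          · exact hvq hcc
        · intro hcc
          rcases hcase with ⟨rfl, rfl⟩ | ⟨rfl, rfl⟩
          · exact hvq hcc
          · exact hc hcc.symm
    · -- 2 + 1 = vv row : impossible
      have h00 : (a2 h r).1.1.val = 2 := rfl
      have h3 := vv.1.1.1.isLt
      omega
    · -- vv row + 1 = 2 : vv row 1
      have hw1 : vv.1.1.1 = 1 := by
        have hv : vv.1.1.1.val = 1 := by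
          have h00 : (a2 h r).1.1.val = 2 := rfl
          omega
        exact Fin.ext hv
      have hrl : r.val ≠ n - 1 := by
        have := col_ne_last vv.1 hw1
        intro hcc
        exact this (by rw [← hc]; exact hcc)
      apply vv.2
      have hveq : vv.1 = a1 h r hrl := by
        rw [eq_a1 vv.1 hw1]
        apply Subtype.ext
        rw [a1_fst, a1_fst, ← hc]
        rfl
      rw [hveq]
      have hmater : mate r = a1 h r hrl := by
        simp only [hmate, dif_neg hrl]
      rcases hcase with ⟨rfl, -⟩ | ⟨rfl, -⟩
      · exact hmater ▸ mem_matep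
      · exact hmater ▸ mem_mateq
    · -- hs1 : (a2 h r).1 = (0, last) : row contra
      exact fin3_02 (congrArg Prod.fst hs1 : (2 : Fin 3) = 0).symm
    · -- vv = (0, last), r = last
      have hrlast : r = lastc n h := congrArg Prod.snd hs2
      apply vv.2
      have hveq : vv.1 = a0 h (lastc n h) := Subtype.ext hs1
      rw [hveq]
      have hmater : mate r = a0 h (lastc n h) := by
        simp only [hmate, dif_pos (show r.val = n - 1 from congrArg Fin.val hrlast)]
      rcases hcase with ⟨rfl, -⟩ | ⟨rfl, -⟩
      · exact hmater ▸ mem_matep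
      · exact hmater ▸ mem_mateq
  have nm_p : a2 h p ∉ S := nm_a2 p (Or.inl rfl)
  have nm_q : a2 h q ∉ S := nm_a2 q (Or.inr rfl)
  set ua : ↥Sᶜ := ⟨a2 h p, nm_p⟩
  set ub : ↥Sᶜ := ⟨a2 h q, nm_q⟩
  set uc : ↥Sᶜ := ⟨a0 h c0, nm_a0c0⟩
  have hisoa := hiso0 p q (Or.inl ⟨rfl, rfl⟩) nm_p
  have hisob := hiso0 q p (Or.inr ⟨rfl, rfl⟩) nm_q
  apply notTough_of hn3 G' S 3 (by omega)
  · exact three_comps _ ua ub uc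
      (fun hr => by
        have heq := isolated_reach hisoa hr
        have : a2 h p = a2 h q := congrArg Subtype.val heq
        exact hpq (congrArg (fun v : VG n h => v.1.2) this))
      (fun hr => by
        have heq := isolated_reach hisoa hr
        have : a2 h p = a0 h c0 := congrArg Subtype.val heq
        exact fin3_02 (congrArg (fun v : VG n h => v.1.1) this).symm)
      (fun hr => by
        have heq := isolated_reach hisob hr
        have : a2 h q = a0 h c0 := congrArg Subtype.val heq
        exact fin3_02 (congrArg (fun v : VG n h => v.1.1) this).symm)
  · have hcard : S.ncard ≤ n := ncard_range_le g
    have : (S.ncard : ℝ) ≤ (n : ℝ) := Nat.cast_le.2 hcard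
    have hn3' : (3 : ℝ) ≤ (n : ℝ) := by exact_mod_cast hn3
    linarith

lemma exists_ne2 (hn3 : 3 ≤ n) (a b : Fin n) : ∃ z : Fin n, z ≠ a ∧ z ≠ b := by
  classical
  have h1 : ({a, b} : Finset (Fin n)).card ≤ 2 :=
    (Finset.card_insert_le _ _).trans (by simp)
  have h2 : 0 < (({a, b} : Finset (Fin n))ᶜ).card := by
    rw [Finset.card_compl]
    simp only [Fintype.card_fin]
    omega
  obtain ⟨z, hz⟩ := Finset.card_pos.1 h2
  rw [Finset.mem_compl, Finset.mem_insert, Finset.mem_singleton] at hz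
  push_neg at hz
  exact ⟨z, hz⟩

lemma exists_ne3 (hn4 : 4 ≤ n) (a b c : Fin n) : ∃ z : Fin n, z ≠ a ∧ z ≠ b ∧ z ≠ c := by
  classical
  have h1 : ({a, b, c} : Finset (Fin n)).card ≤ 3 :=
    (Finset.card_insert_le _ _).trans (by
      have := (Finset.card_insert_le b ({c} : Finset (Fin n)))
      simp only [Finset.card_singleton] at this
      omega)
  have h2 : 0 < (({a, b, c} : Finset (Fin n))ᶜ).card := by
    rw [Finset.card_compl]
    simp only [Fintype.card_fin]
    omega
  obtain ⟨z, hz⟩ := Finset.card_pos.1 h2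
  rw [Finset.mem_compl, Finset.mem_insert, Finset.mem_insert, Finset.mem_singleton] at hz
  push_neg at hz
  exact ⟨z, hz.1, hz.2.1, hz.2.2⟩

lemma del_row1_three (hn : n = 3) (p q : Fin n) (hp : p.val ≠ n - 1) (hq : q.val ≠ n - 1)
    (hpq : p ≠ q) :
    ¬ Tough (((n : ℝ) + 1) / 3) ((G0 n h).deleteEdges {s(a1 h p hp, a1 h q hq)}) := by
  classical
  set G' : SimpleGraph (VG n h) := (G0 n h).deleteEdges {s(a1 h p hp, a1 h q hq)} with hG'
  set g : Fin 2 → VG n h := fun k => if k.val = 0 then a0 h p else a2 h p with hg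
  set S : Set (VG n h) := Set.range g with hS
  have mem_a0p : a0 h p ∈ S := ⟨⟨0, by omega⟩, by simp only [hg]; rfl⟩
  have mem_a2p : a2 h p ∈ S := ⟨⟨1, by omega⟩, by simp only [hg]; rfl⟩
  have nm_a1p : a1 h p hp ∉ S := by
    rintro ⟨k, hk⟩
    simp only [hg] at hk
    split_ifs at hk
    · exact fin3_01 (congrArg (fun v : VG n h => v.1.1) hk)
    · exact fin3_12 (congrArg (fun v : VG n h => v.1.1) hk).symm
  have nm_a0q : a0 h q ∉ S := by
    rintro ⟨k, hk⟩
    simp only [hg] at hk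
    split_ifs at hk
    · exact hpq (congrArg (fun v : VG n h => v.1.2) hk)
    · exact fin3_02 (congrArg (fun v : VG n h => v.1.1) hk).symm
  set ua : ↥Sᶜ := ⟨a1 h p hp, nm_a1p⟩
  set ub : ↥Sᶜ := ⟨a0 h q, nm_a0q⟩
  have hiso : ∀ vv : ↥Sᶜ, ¬ (G'.induce Sᶜ).Adj ua vv := by
    intro vv hadj
    have hadj' : G'.Adj (a1 h p hp) vv.1 := hadj
    rw [hG', deleteEdges_adj] at hadj'
    obtain ⟨hG0a, hne⟩ := hadj'
    rcases adj_cases hG0a with ⟨hr, hc⟩ | ⟨hc, hr | hr⟩ | ⟨hs1, hs2⟩ | ⟨hs1, hs2⟩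
    · -- same row 1 : must be column q
      have hw1 : vv.1.1.1 = 1 := hr.symm
      have hcl : vv.1.1.2.val ≠ n - 1 := col_ne_last vv.1 hw1
      have hcp : p.val ≠ vv.1.1.2.val := fun hv => hc (Fin.ext hv)
      have hpqv : p.val ≠ q.val := fun hv => hpq (Fin.ext hv)
      have hcq : vv.1.1.2.val = q.val := by
        have hb1 := vv.1.1.2.isLt
        have hb2 := p.isLt
        have hb3 := q.isLt
        omega
      have hveq : vv.1 = a1 h q hq := by
        rw [eq_a1 vv.1 hw1]
        apply Subtype.ext
        rw [a1_fst, a1_fst]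
        exact Prod.ext_iff.2 ⟨rfl, Fin.ext hcq⟩
      apply hne
      rw [Set.mem_singleton_iff, hveq]
    · -- col p, row 2
      have hw2 : vv.1.1.1 = 2 := by
        have hv : vv.1.1.1.val = 2 := by
          have h0 : (a1 h p hp).1.1.val = 1 := rfl
          omega
        exact Fin.ext hv
      apply vv.2
      have hveq : vv.1 = a2 h p := by
        rw [eq_a2 vv.1 hw2]
        apply Subtype.ext
        rw [a2_fst, a2_fst, ← hc]
        rfl
      rw [hveq]
      exact mem_a2p
    · -- col p, row 0
      have hw0 : vv.1.1.1 = 0 := by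
        have hv : vv.1.1.1.val = 0 := by
          have h0 : (a1 h p hp).1.1.val = 1 := rfl
          omega
        exact Fin.ext hv
      apply vv.2
      have hveq : vv.1 = a0 h p := by
        rw [eq_a0 vv.1 hw0]
        apply Subtype.ext
        rw [a0_fst, a0_fst, ← hc]
        rfl
      rw [hveq]
      exact mem_a0p
    · exact fin3_01 ((congrArg Prod.fst hs1 : (1 : Fin 3) = 0)).symm
    · exact fin3_12 (congrArg Prod.fst hs2 : (1 : Fin 3) = 2)
  apply notTough_of (by omega) G' S 2 (by omega)
  · exact two_comps _ ua ub
      (fun hr => by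
        have heq := isolated_reach hiso hr
        exact fin3_01 (((congrArg (fun vv : ↥Sᶜ => vv.1.1.1) heq) : (1 : Fin 3) = 0)).symm)
  · have hcard : S.ncard ≤ 2 := ncard_range_le g
    have h1 : (S.ncard : ℝ) ≤ 2 := by exact_mod_cast hcard
    have hn3' : (3 : ℝ) ≤ (n : ℝ) := by exact_mod_cast (by omega : 3 ≤ n)
    linarith

lemma del_row1_big (hn4 : 4 ≤ n) (p q : Fin n) (hp : p.val ≠ n - 1) (hq : q.val ≠ n - 1)
    (hpq : p ≠ q) :
    ¬ Tough (((n : ℝ) + 1) / 3) ((G0 n h).deleteEdges {s(a1 h p hp, a1 h q hq)}) := by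
  classical
  set G' : SimpleGraph (VG n h) := (G0 n h).deleteEdges {s(a1 h p hp, a1 h q hq)} with hG'
  set b1 : (r : Fin n) → VG n h := fun r =>
    if hr : r.val = n - 1 then a0 h r else a1 h r hr with hb1
  have b1_row2 : ∀ r : Fin n, (b1 r).1.1 ≠ 2 := by
    intro r
    simp only [hb1]
    split_ifs
    · exact fun hc => fin3_02 hc
    · exact fun hc => fin3_12 hc
  have b1_col : ∀ r : Fin n, (b1 r).1.2 = r := by
    intro r
    simp only [hb1]
    split_ifs <;> rfl
  set g : Fin (n + 2) → VG n h := fun k =>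
    if hk : k.val < n then
      (if k.val = p.val ∨ k.val = q.val then a0 h ⟨k.val, hk⟩ else b1 ⟨k.val, hk⟩)
    else if k.val = n then a2 h p else a2 h q with hg
  set S : Set (VG n h) := Set.range g with hS
  have mem_a0pq : ∀ r : Fin n, r = p ∨ r = q → a0 h r ∈ S := by
    intro r hr
    refine ⟨⟨r.val, by omega⟩, ?_⟩
    show (if hk : r.val < n then
      (if r.val = p.val ∨ r.val = q.val then a0 h ⟨r.val, hk⟩ else b1 ⟨r.val, hk⟩)
      else if r.val = n then a2 h p else a2 h q) = a0 h r
    rw [dif_pos r.isLt, if_pos (by rcases hr with rfl | rfl; exacts [Or.inl rfl, Or.inr rfl])]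
  have mem_b1 : ∀ r : Fin n, r ≠ p → r ≠ q → b1 r ∈ S := by
    intro r hr1 hr2
    refine ⟨⟨r.val, by omega⟩, ?_⟩
    show (if hk : r.val < n then
      (if r.val = p.val ∨ r.val = q.val then a0 h ⟨r.val, hk⟩ else b1 ⟨r.val, hk⟩)
      else if r.val = n then a2 h p else a2 h q) = b1 r
    have hcond : ¬(r.val = p.val ∨ r.val = q.val) := by
      rintro (hc | hc)
      · exact hr1 (Fin.ext hc)
      · exact hr2 (Fin.ext hc)
    rw [dif_pos r.isLt, if_neg hcond]
  have mem_a2p : a2 h p ∈ S := by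
    refine ⟨⟨n, by omega⟩, ?_⟩
    show (if hk : n < n then
      (if n = p.val ∨ n = q.val then a0 h ⟨n, hk⟩ else b1 ⟨n, hk⟩)
      else if n = n then a2 h p else a2 h q) = a2 h p
    rw [dif_neg (by omega), if_pos rfl]
  have mem_a2q : a2 h q ∈ S := by
    refine ⟨⟨n + 1, by omega⟩, ?_⟩
    show (if hk : n + 1 < n then
      (if n + 1 = p.val ∨ n + 1 = q.val then a0 h ⟨n + 1, hk⟩ else b1 ⟨n + 1, hk⟩)
      else if n + 1 = n then a2 h p else a2 h q) = a2 h q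
    rw [dif_neg (by omega), if_neg (by omega)]
  have mem_a0last : a0 h (lastc n h) ∈ S := by
    have hm := mem_b1 (lastc n h) (fun hc => hp (congrArg Fin.val hc).symm)
      (fun hc => hq (congrArg Fin.val hc).symm)
    have hb : b1 (lastc n h) = a0 h (lastc n h) := by
      simp only [hb1, dif_pos (show (lastc n h).val = n - 1 from rfl)]
    rw [hb] at hm
    exact hm
  have mem_a1 : ∀ (r : Fin n) (hr : r.val ≠ n - 1), r ≠ p → r ≠ q → a1 h r hr ∈ S := by
    intro r hr hr1 hr2
    have hm := mem_b1 r hr1 hr2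
    have hb : b1 r = a1 h r hr := by simp only [hb1, dif_neg hr]
    rw [hb] at hm
    exact hm
  have nm_a1pq : ∀ (r : Fin n) (hr : r.val ≠ n - 1), r = p ∨ r = q → a1 h r hr ∉ S := by
    rintro r hr hrc ⟨k, hk⟩
    simp only [hg] at hk
    split_ifs at hk with h1 h2 h3
    · exact fin3_01 (congrArg (fun v : VG n h => v.1.1) hk)
    · -- b1 branch
      have hcv : (⟨k.val, h1⟩ : Fin n) = r :=
        (b1_col _).symm.trans (congrArg (fun v : VG n h => v.1.2) hk)
      apply h2
      have : k.val = r.val := congrArg Fin.val hcv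
      rcases hrc with rfl | rfl
      · exact Or.inl this
      · exact Or.inr this
    · exact fin3_12 (congrArg (fun v : VG n h => v.1.1) hk).symm
    · exact fin3_12 (congrArg (fun v : VG n h => v.1.1) hk).symm
  have nm_a0 : ∀ r : Fin n, r ≠ p → r ≠ q → r.val ≠ n - 1 → a0 h r ∉ S := by
    rintro r hr1 hr2 hr3 ⟨k, hk⟩
    simp only [hg] at hk
    split_ifs at hk with h1 h2 h3
    · have hcv : (⟨k.val, h1⟩ : Fin n) = r :=
        congrArg (fun v : VG n h => v.1.2) hk
      have hkv : k.val = r.val := congrArg Fin.val hcv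
      rcases h2 with hc | hc
      · exact hr1 (Fin.ext (by omega))
      · exact hr2 (Fin.ext (by omega))
    · -- b1 branch : b1 x = a0 r means x.val = n-1 and col x = r
      have hcv : (⟨k.val, h1⟩ : Fin n) = r :=
        (b1_col _).symm.trans (congrArg (fun v : VG n h => v.1.2) hk)
      have hrow : (b1 (⟨k.val, h1⟩ : Fin n)).1.1 = 0 := by
        rw [hk]
        rfl
      simp only [hb1] at hrow
      split_ifs at hrow with h4
      · exact hr3 (by rw [← hcv]; exact h4)
      · exact fin3_01 hrow.symm
    · exact fin3_02 (congrArg (fun v : VG n h => v.1.1) hk).symm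
    · exact fin3_02 (congrArg (fun v : VG n h => v.1.1) hk).symm
  have nm_a2 : ∀ r : Fin n, r ≠ p → r ≠ q → a2 h r ∉ S := by
    rintro r hr1 hr2 ⟨k, hk⟩
    simp only [hg] at hk
    split_ifs at hk with h1 h2 h3
    · exact fin3_02 (congrArg (fun v : VG n h => v.1.1) hk)
    · exact b1_row2 _ (congrArg (fun v : VG n h => v.1.1) hk)
    · exact hr1 (congrArg (fun v : VG n h => v.1.2) hk).symm
    · exact hr2 (congrArg (fun v : VG n h => v.1.2) hk).symm
  -- choose columns z (row 0) and w (row 2)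
  obtain ⟨z, hz1, hz2, hz3⟩ := exists_ne3 hn4 p q (lastc n h)
  have hz3' : z.val ≠ n - 1 := fun hc => hz3 (Fin.ext hc)
  obtain ⟨w, hw1, hw2⟩ := exists_ne2 (by omega) p q
  have nm_a1p : a1 h p hp ∉ S := nm_a1pq p hp (Or.inl rfl)
  have nm_a1q : a1 h q hq ∉ S := nm_a1pq q hq (Or.inr rfl)
  set ua : ↥Sᶜ := ⟨a1 h p hp, nm_a1p⟩
  set ub : ↥Sᶜ := ⟨a1 h q hq, nm_a1q⟩
  set uc : ↥Sᶜ := ⟨a0 h z, nm_a0 z hz1 hz2 hz3'⟩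
  set ud : ↥Sᶜ := ⟨a2 h w, nm_a2 w hw1 hw2⟩
  -- isolation of a1 r for r ∈ {p, q}
  have hiso0 : ∀ (r rr : Fin n) (hrv : r.val ≠ n - 1) (hrrv : rr.val ≠ n - 1),
      r = p ∧ rr = q ∨ r = q ∧ rr = p →
      ∀ hm : a1 h r hrv ∉ S, ∀ vv : ↥Sᶜ, ¬ (G'.induce Sᶜ).Adj ⟨a1 h r hrv, hm⟩ vv := by
    rintro r rr hrv hrrv hcase hm vv hadj
    have hadj' : G'.Adj (a1 h r hrv) vv.1 := hadj
    rw [hG', deleteEdges_adj] at hadj'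
    obtain ⟨hG0a, hne⟩ := hadj'
    rcases adj_cases hG0a with ⟨hr, hc⟩ | ⟨hc, hr | hr⟩ | ⟨hs1, hs2⟩ | ⟨hs1, hs2⟩
    · -- same row 1
      have hw1' : vv.1.1.1 = 1 := hr.symm
      have hcl : vv.1.1.2.val ≠ n - 1 := col_ne_last vv.1 hw1'
      by_cases hvq : vv.1.1.2 = rr
      · -- deleted edge
        apply hne
        rw [Set.mem_singleton_iff]
        have hveq : vv.1 = a1 h rr hrrv := by
          rw [eq_a1 vv.1 hw1']
          apply Subtype.ext
          rw [a1_fst, a1_fst, hvq]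
        rw [hveq]
        rcases hcase with ⟨rfl, rfl⟩ | ⟨rfl, rfl⟩
        · rfl
        · exact Sym2.eq_swap
      · apply vv.2
        rw [eq_a1 vv.1 hw1']
        apply mem_a1
        · intro hcc
          rcases hcase with ⟨rfl, rfl⟩ | ⟨rfl, rfl⟩
          · exact hc hcc.symm
          · exact hvq hcc
        · intro hcc
          rcases hcase with ⟨rfl, rfl⟩ | ⟨rfl, rfl⟩
          · exact hvq hcc
          · exact hc hcc.symm
    · -- col r, row 2
      have hw2' : vv.1.1.1 = 2 := by
        have hv : vv.1.1.1.val = 2 := by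
          have h0 : (a1 h r hrv).1.1.val = 1 := rfl
          omega
        exact Fin.ext hv
      apply vv.2
      have hveq : vv.1 = a2 h r := by
        rw [eq_a2 vv.1 hw2']
        apply Subtype.ext
        rw [a2_fst, a2_fst, ← hc]
        rfl
      rw [hveq]
      rcases hcase with ⟨rfl, -⟩ | ⟨rfl, -⟩
      · exact mem_a2p
      · exact mem_a2q
    · -- col r, row 0
      have hw0' : vv.1.1.1 = 0 := by
        have hv : vv.1.1.1.val = 0 := by
          have h0 : (a1 h r hrv).1.1.val = 1 := rfl
          omega
        exact Fin.ext hv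
      apply vv.2
      have hveq : vv.1 = a0 h r := by
        rw [eq_a0 vv.1 hw0']
        apply Subtype.ext
        rw [a0_fst, a0_fst, ← hc]
        rfl
      rw [hveq]
      apply mem_a0pq
      rcases hcase with ⟨rfl, -⟩ | ⟨rfl, -⟩
      · exact Or.inl rfl
      · exact Or.inr rfl
    · exact fin3_01 ((congrArg Prod.fst hs1 : (1 : Fin 3) = 0)).symm
    · exact fin3_12 (congrArg Prod.fst hs2 : (1 : Fin 3) = 2)
  have hisoa := hiso0 p q hp hq (Or.inl ⟨rfl, rfl⟩) nm_a1p
  have hisob := hiso0 q p hq hp (Or.inr ⟨rfl, rfl⟩) nm_a1q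
  -- invariant separating rows 0 and 2
  have hinv : ∀ aa bb : ↥Sᶜ, (G'.induce Sᶜ).Adj aa bb → aa.1.1.1 = 0 → bb.1.1.1 = 0 := by
    intro aa bb hadj hPa
    have hadj' : G'.Adj aa.1 bb.1 := hadj
    rw [hG', deleteEdges_adj] at hadj'
    obtain ⟨hG0a, hne⟩ := hadj'
    rcases adj_cases hG0a with ⟨hr, hc⟩ | ⟨hc, hr | hr⟩ | ⟨hs1, hs2⟩ | ⟨hs1, hs2⟩
    · rw [← hr]; exact hPa
    · -- bb row 1
      exfalso
      have h0 : aa.1.1.1.val = 0 := congrArg Fin.val hPa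
      have hb1' : bb.1.1.1 = 1 := by
        have hv : bb.1.1.1.val = 1 := by omega
        exact Fin.ext hv
      have hbl : bb.1.1.2.val ≠ n - 1 := col_ne_last bb.1 hb1'
      by_cases hcp : bb.1.1.2 = p ∨ bb.1.1.2 = q
      · -- then aa = a0 p or a0 q ∈ S, contradicting that aa survives
        apply aa.2
        have haeq : aa.1 = a0 h bb.1.1.2 := by
          rw [eq_a0 aa.1 hPa]
          apply Subtype.ext
          rw [a0_fst, a0_fst, hc]
        rw [haeq]
        exact mem_a0pq _ hcp
      · push_neg at hcp
        apply bb.2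
        rw [eq_a1 bb.1 hb1']
        exact mem_a1 _ _ hcp.1 hcp.2
    · exfalso
      have h0 : aa.1.1.1.val = 0 := congrArg Fin.val hPa
      omega
    · -- aa = (0,last) ∈ S : contradiction with survivor
      exfalso
      apply aa.2
      have haeq : aa.1 = a0 h (lastc n h) := Subtype.ext hs1
      rw [haeq]
      exact mem_a0last
    · exfalso
      have : aa.1.1.1 = 2 := by rw [hs2]
      rw [hPa] at this
      exact fin3_02 this
  have hPcd : ¬ (G'.induce Sᶜ).Reachable uc ud := by
    intro hr
    have hco : ud.1.1.1 = 0 := reach_invar (fun vv : ↥Sᶜ => vv.1.1.1 = 0)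
      (fun aa bb ha hb => hinv aa bb ha hb) hr rfl
    exact fin3_02 (hco : (2 : Fin 3) = 0).symm
  apply notTough_of (by omega) G' S 4 (by omega)
  · exact four_comps _ ua ub uc ud
      (fun hr => by
        have heq := isolated_reach hisoa hr
        have : a1 h p hp = a1 h q hq := congrArg Subtype.val heq
        exact hpq (congrArg (fun v : VG n h => v.1.2) this))
      (fun hr => by
        have heq := isolated_reach hisoa hr
        exact fin3_01 (((congrArg (fun vv : ↥Sᶜ => vv.1.1.1) heq) : (1 : Fin 3) = 0)).symm)
      (fun hr => by
        have heq := isolated_reach hisoa hr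
        exact fin3_12 ((congrArg (fun vv : ↥Sᶜ => vv.1.1.1) heq) : (1 : Fin 3) = 2))
      (fun hr => by
        have heq := isolated_reach hisob hr
        exact fin3_01 (((congrArg (fun vv : ↥Sᶜ => vv.1.1.1) heq) : (1 : Fin 3) = 0)).symm)
      (fun hr => by
        have heq := isolated_reach hisob hr
        exact fin3_12 ((congrArg (fun vv : ↥Sᶜ => vv.1.1.1) heq) : (1 : Fin 3) = 2))
      hPcd
  · have hcard : S.ncard ≤ n + 2 := ncard_range_le g
    have h1 : (S.ncard : ℝ) ≤ (n : ℝ) + 2 := by exact_mod_cast hcard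
    have hn4' : (4 : ℝ) ≤ (n : ℝ) := by exact_mod_cast hn4
    linarith

lemma not_tough_del_rel (hn3 : 3 ≤ n) {x y : VG n h} (hne : x ≠ y)
    (hrel : (x.1.1 = y.1.1 ∧ x.1.2 ≠ y.1.2) ∨
      (x.1.2 = y.1.2 ∧ x.1.1.val + 1 = y.1.1.val) ∨
      (x.1 = (0, lastc n h) ∧ y.1 = (2, lastc n h))) :
    ¬ Tough (((n : ℝ) + 1) / 3) ((G0 n h).deleteEdges {s(x, y)}) := by
  rcases hrel with ⟨hrow, hcol⟩ | ⟨hcol, hsucc⟩ | ⟨hs1, hs2⟩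
  · -- same row
    have h3 : x.1.1 = 0 ∨ x.1.1 = 1 ∨ x.1.1 = 2 := by omega
    rcases h3 with h0 | h1 | h2
    · have hx : x = a0 h x.1.2 := eq_a0 x h0
      have hy : y = a0 h y.1.2 := eq_a0 y (hrow.symm.trans h0)
      rw [hx, hy]
      exact del_row0 hn3 _ _ hcol
    · have hpv := col_ne_last x h1
      have hqv := col_ne_last y (hrow.symm.trans h1)
      have hx : x = a1 h x.1.2 hpv := eq_a1 x h1
      have hy : y = a1 h y.1.2 hqv := eq_a1 y (hrow.symm.trans h1)
      rw [hx, hy]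
      rcases Nat.lt_or_ge n 4 with h4 | h4
      · exact del_row1_three (by omega) _ _ hpv hqv hcol
      · exact del_row1_big h4 _ _ hpv hqv hcol
    · have hx : x = a2 h x.1.2 := eq_a2 x h2
      have hy : y = a2 h y.1.2 := eq_a2 y (hrow.symm.trans h2)
      rw [hx, hy]
      exact del_row2 hn3 _ _ hcol
  · -- rung
    have h3 : x.1.1 = 0 ∨ x.1.1 = 1 ∨ x.1.1 = 2 := by omega
    rcases h3 with h0 | h1 | h2
    · have hy1 : y.1.1 = 1 := by
        have hv0 : x.1.1.val = 0 := congrArg Fin.val h0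
        have hv : y.1.1.val = 1 := by omega
        exact Fin.ext hv
      have hp : x.1.2.val ≠ n - 1 := by
        have := col_ne_last y hy1
        rw [← hcol] at this
        exact this
      have hx : x = a0 h x.1.2 := eq_a0 x h0
      have hy : y = a1 h x.1.2 hp := Subtype.ext (Prod.ext_iff.2 ⟨hy1, hcol.symm⟩)
      rw [hx, hy]
      exact del_rung01 hn3 _ hp
    · have hy2 : y.1.1 = 2 := by
        have hv0 : x.1.1.val = 1 := congrArg Fin.val h1
        have hv : y.1.1.val = 2 := by omega
        exact Fin.ext hv
      have hp : x.1.2.val ≠ n - 1 := col_ne_last x h1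
      have hx : x = a1 h x.1.2 hp := eq_a1 x h1
      have hy : y = a2 h x.1.2 := Subtype.ext (Prod.ext_iff.2 ⟨hy2, hcol.symm⟩)
      rw [hx, hy]
      exact del_rung12 hn3 _ hp
    · exfalso
      have hv0 : x.1.1.val = 2 := congrArg Fin.val h2
      have := y.1.1.isLt
      omega
  · -- special edge
    have hx : x = a0 h (lastc n h) := Subtype.ext hs1
    have hy : y = a2 h (lastc n h) := Subtype.ext hs2
    rw [hx, hy]
    exact del_special hn3

lemma not_tough_del (hn3 : 3 ≤ n) {x y : VG n h} (hadj : (G0 n h).Adj x y) :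
    ¬ Tough (((n : ℝ) + 1) / 3) ((G0 n h).deleteEdges {s(x, y)}) := by
  rcases (G0_adj h).1 hadj with ⟨hne, hrel | hrel⟩
  · exact not_tough_del_rel hn3 hne hrel
  · have hswap := not_tough_del_rel hn3 (Ne.symm hne) hrel
    rw [show s(x, y) = s(y, x) from Sym2.eq_swap]
    exact hswap

end Min

end G0Aux

/-- for `n ≥ 3`, the graph `G_0` is `n`-regular and minimally
`(n+1)/3`-tough. -/
theorem G0_regular_minimally_tough (n : ℕ) (hn : 3 ≤ n) :
    (∀ v : {x : Fin 3 × Fin n // x ≠ delVert n (by omega)}, ndeg (G0 n (by omega)) v = n) ∧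
    MinTough (((n : ℝ) + 1) / 3) (G0 n (by omega)) := by
  refine ⟨fun v => G0Aux.ndeg_G0 hn v, G0Aux.tough_G0 _ hn, fun e he => ?_⟩
  revert he
  refine Sym2.ind (fun x y he => ?_) e
  exact G0Aux.not_tough_del hn ((SimpleGraph.mem_edgeSet _).1 he)
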